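/- (Proposition C.5, Lipschitz continuity of I.) For all π, π̃ ∈ M_1 and all u, ũ ≥ 0, one has |Iv(π,u) − Iv(π̃,ũ)| ≤ (C_v + 2[v]) |π − π̃| + C_v C_λ |u − ũ|. -/

import Mathlib

open MeasureTheory Finset

noncomputable section

namespace PDMP

/-- Integrated jump rate `Λ_i(t) = ∫_0^t λ_i(s) ds`. -/
def Lam (lam : ℕ → ℝ → ℝ) (i : ℕ) (t : ℝ) : ℝ := ∫ s in (0:ℝ)..t, lam i s

/-- The unnormalized filter density `Ψ_m^j(π,y,s)`. -/
def psiNum (q d : ℕ) (ts : ℕ → ℝ) (lam : ℕ → ℝ → ℝ) (Q : ℕ → ℕ → ℝ → ℝ)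
    (fW : (Fin d → ℝ) → ℝ) (phi : ℕ → Fin d → ℝ)
    (m : ℕ) (p : ℕ → ℝ) (y : Fin d → ℝ) (s : ℝ) (j : ℕ) : ℝ :=
  ∑ i ∈ Finset.Icc (m + 1) q,
    p i * lam i s * Real.exp (-(Lam lam i s)) * Q i j s * fW (y - phi j)

/-- `Ψ̄_m(π,y,s) = Σ_k Ψ_m^k(π,y,s)`. -/
def psiBar (q d : ℕ) (ts : ℕ → ℝ) (lam : ℕ → ℝ → ℝ) (Q : ℕ → ℕ → ℝ → ℝ)
    (fW : (Fin d → ℝ) → ℝ) (phi : ℕ → Fin d → ℝ)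
    (m : ℕ) (p : ℕ → ℝ) (y : Fin d → ℝ) (s : ℝ) : ℝ :=
  ∑ k ∈ Finset.Icc 1 q, psiNum q d ts lam Q fW phi m p y s k

open Classical in
/-- The filter update `Ψ(π,y,s)`. -/
def Psi (q d : ℕ) (ts : ℕ → ℝ) (lam : ℕ → ℝ → ℝ) (Q : ℕ → ℕ → ℝ → ℝ)
    (fW : (Fin d → ℝ) → ℝ) (phi : ℕ → Fin d → ℝ)
    (p : ℕ → ℝ) (y : Fin d → ℝ) (s : ℝ) : ℕ → ℝ :=
  if ∃ m, 1 ≤ m ∧ m ≤ q ∧ s = ts m then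
    let m := sInf {m | 1 ≤ m ∧ m ≤ q ∧ s = ts m}
    if 0 < ∑ k ∈ Finset.Icc 1 q, Q m k (ts m) * fW (y - phi k) then
      fun j => Q m j (ts m) * fW (y - phi j) /
        (∑ k ∈ Finset.Icc 1 q, Q m k (ts m) * fW (y - phi k))
    else p
  else if ∃ m, m < q ∧ ts m < s ∧ s < ts (m + 1) then
    let m := sInf {m | m < q ∧ ts m < s ∧ s < ts (m + 1)}
    if 0 < psiBar q d ts lam Q fW phi m p y s then
      fun j => psiNum q d ts lam Q fW phi m p y s j / psiBar q d ts lam Q fW phi m p y s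
    else p
  else p

/-- ℓ¹ distance on `ℝ^q` (coordinates `1,…,q`). -/
def l1 (q : ℕ) (p p' : ℕ → ℝ) : ℝ := ∑ i ∈ Finset.Icc 1 q, |p i - p' i|

/-- Membership in the probability simplex `M_1`. -/
def mem1 (q : ℕ) (p : ℕ → ℝ) : Prop :=
  (∀ i ∈ Finset.Icc 1 q, 0 ≤ p i) ∧ ∑ i ∈ Finset.Icc 1 q, p i = 1

/-- The operator `I`. -/
def Iop (q d : ℕ) (ts : ℕ → ℝ) (lam : ℕ → ℝ → ℝ) (Q : ℕ → ℕ → ℝ → ℝ)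
    (fW : (Fin d → ℝ) → ℝ) (phi : ℕ → Fin d → ℝ)
    (v : (ℕ → ℝ) → ℝ) (p : ℕ → ℝ) (u : ℝ) : ℝ :=
  ∑ i ∈ Finset.Icc 1 q, p i *
    ∫ s in (0:ℝ)..(min u (ts i)),
      lam i s * Real.exp (-(Lam lam i s)) *
        ∫ y : Fin d → ℝ,
          v (Psi q d ts lam Q fW phi p y s) *
            ∑ j ∈ Finset.Icc 1 q, Q i j s * fW (y - phi j)

/-- Boundary (forced-jump) term appearing in the operator `G`. -/
def bTerm (q d : ℕ) (ts : ℕ → ℝ) (lam : ℕ → ℝ → ℝ) (Q : ℕ → ℕ → ℝ → ℝ)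
    (fW : (Fin d → ℝ) → ℝ) (phi : ℕ → Fin d → ℝ)
    (v : (ℕ → ℝ) → ℝ) (p : ℕ → ℝ) (i : ℕ) : ℝ :=
  p i * Real.exp (-(Lam lam i (ts i))) *
    ∫ y : Fin d → ℝ,
      v (Psi q d ts lam Q fW phi p y (ts i)) *
        ∑ j ∈ Finset.Icc 1 q, Q i j (ts i) * fW (y - phi j)

/-- The operator `G`. -/
def Gop (q d : ℕ) (ts : ℕ → ℝ) (lam : ℕ → ℝ → ℝ) (Q : ℕ → ℕ → ℝ → ℝ)
    (fW : (Fin d → ℝ) → ℝ) (phi : ℕ → Fin d → ℝ)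
    (v : (ℕ → ℝ) → ℝ) (p : ℕ → ℝ) (u : ℝ) : ℝ :=
  Iop q d ts lam Q fW phi v p u +
    ∑ i ∈ Finset.Icc 1 q, if ts i ≤ u then bTerm q d ts lam Q fW phi v p i else 0

/-- The operator `H`. -/
def Hop (q : ℕ) (ts : ℕ → ℝ) (lam : ℕ → ℝ → ℝ)
    (g : ℕ → ℝ → ℝ) (p : ℕ → ℝ) (u : ℝ) : ℝ :=
  ∑ i ∈ Finset.Icc 1 q, if u < ts i then p i * Real.exp (-(Lam lam i u)) * g i u else 0

/-- The operator `J`. -/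
def Jop (q d : ℕ) (ts : ℕ → ℝ) (lam : ℕ → ℝ → ℝ) (Q : ℕ → ℕ → ℝ → ℝ)
    (fW : (Fin d → ℝ) → ℝ) (phi : ℕ → Fin d → ℝ)
    (v : (ℕ → ℝ) → ℝ) (g : ℕ → ℝ → ℝ) (p : ℕ → ℝ) (u : ℝ) : ℝ :=
  Hop q ts lam g p u + Gop q d ts lam Q fW phi v p u

/-- The operator `K`. -/
def Kop (q d : ℕ) (ts : ℕ → ℝ) (lam : ℕ → ℝ → ℝ) (Q : ℕ → ℕ → ℝ → ℝ)
    (fW : (Fin d → ℝ) → ℝ) (phi : ℕ → Fin d → ℝ)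
    (v : (ℕ → ℝ) → ℝ) (p : ℕ → ℝ) : ℝ :=
  Gop q d ts lam Q fW phi v p (ts q)

/-- The dynamic programming operator `L(v,g)(π) = sup_{u ≥ 0} J(v,g)(π,u)`. -/
def Lop (q d : ℕ) (ts : ℕ → ℝ) (lam : ℕ → ℝ → ℝ) (Q : ℕ → ℕ → ℝ → ℝ)
    (fW : (Fin d → ℝ) → ℝ) (phi : ℕ → Fin d → ℝ)
    (v : (ℕ → ℝ) → ℝ) (g : ℕ → ℝ → ℝ) (p : ℕ → ℝ) : ℝ :=
  ⨆ u : Set.Ici (0:ℝ), Jop q d ts lam Q fW phi v g p u.1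

/-- The operator `H^m`. -/
def Hm (q : ℕ) (ts : ℕ → ℝ) (lam : ℕ → ℝ → ℝ) (m : ℕ)
    (g : ℕ → ℝ → ℝ) (p : ℕ → ℝ) (u : ℝ) : ℝ :=
  if u < ts m then Hop q ts lam g p (ts m)
  else ∑ i ∈ Finset.Icc (m + 1) q,
    p i * Real.exp (-(Lam lam i (min u (ts (m + 1))))) * g i (min u (ts (m + 1)))

/-- The operator `G^m`. -/
def Gm (q d : ℕ) (ts : ℕ → ℝ) (lam : ℕ → ℝ → ℝ) (Q : ℕ → ℕ → ℝ → ℝ)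
    (fW : (Fin d → ℝ) → ℝ) (phi : ℕ → Fin d → ℝ) (m : ℕ)
    (v : (ℕ → ℝ) → ℝ) (p : ℕ → ℝ) (u : ℝ) : ℝ :=
  if u < ts m then Gop q d ts lam Q fW phi v p (ts m)
  else Iop q d ts lam Q fW phi v p (min u (ts (m + 1))) +
    ∑ i ∈ Finset.Icc 1 m, bTerm q d ts lam Q fW phi v p i

/-- The discretization grid `Gr_m(Δ)`. -/
def grid (ts : ℕ → ℝ) (Δ : ℝ) (m : ℕ) : Set ℝ :=
  {u | (∃ i : ℕ, 1 ≤ i ∧ ts m + i * Δ ≤ ts (m + 1) - Δ ∧ u = ts m + i * Δ) ∨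
    u = ts (m + 1) - Δ}


lemma ts_mono' {q : ℕ} {ts : ℕ → ℝ} (h : ∀ i, i < q → ts i ≤ ts (i + 1)) :
    ∀ {i j : ℕ}, i ≤ j → j ≤ q → ts i ≤ ts j := by
  intro i j hij hjq
  induction j with
  | zero => interval_cases i; rfl
  | succ n ih =>
    rcases Nat.lt_or_ge i (n+1) with hlt | hge
    · exact le_trans (ih (by omega) (by omega)) (h n (by omega))
    · have : i = n + 1 := by omega
      subst this; rfl

section Prim

variable {f : ℝ → ℝ} {C : ℝ}

lemma iint_of_bdd (hf : Measurable f) (h0 : ∀ s, 0 ≤ f s) (h1 : ∀ s, f s ≤ C)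
    (a b : ℝ) : IntervalIntegrable f volume a b := by
  rw [intervalIntegrable_iff]
  refine Integrable.mono' (g := fun _ => C) ?_ hf.aestronglyMeasurable.restrict
    (ae_of_all _ fun s => ?_)
  · exact (integrableOn_const_iff).mpr (Or.inr (by rw [Set.uIoc]; exact measure_Ioc_lt_top))
  · rw [Real.norm_eq_abs, abs_of_nonneg (h0 s)]; exact h1 s

lemma prim_sub (hf : Measurable f) (h0 : ∀ s, 0 ≤ f s) (h1 : ∀ s, f s ≤ C)
    (a b : ℝ) :
    (∫ s in (0:ℝ)..b, f s) - (∫ s in (0:ℝ)..a, f s) = ∫ s in a..b, f s := by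
  have := intervalIntegral.integral_add_adjacent_intervals
    (iint_of_bdd hf h0 h1 0 a) (iint_of_bdd hf h0 h1 a b)
  linarith

lemma prim_mono (hf : Measurable f) (h0 : ∀ s, 0 ≤ f s) (h1 : ∀ s, f s ≤ C)
    {a b : ℝ} (hab : a ≤ b) :
    (∫ s in (0:ℝ)..a, f s) ≤ ∫ s in (0:ℝ)..b, f s := by
  have := prim_sub hf h0 h1 a b
  have h2 : 0 ≤ ∫ s in a..b, f s :=
    intervalIntegral.integral_nonneg hab (fun u _ => h0 u)
  linarith

lemma prim_nonneg (h0 : ∀ s, 0 ≤ f s) {t : ℝ} (ht : 0 ≤ t) :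
    0 ≤ ∫ s in (0:ℝ)..t, f s :=
  intervalIntegral.integral_nonneg ht (fun u _ => h0 u)

lemma prim_sub_le (hf : Measurable f) (h0 : ∀ s, 0 ≤ f s) (h1 : ∀ s, f s ≤ C)
    {a b : ℝ} (hab : a ≤ b) :
    (∫ s in (0:ℝ)..b, f s) - (∫ s in (0:ℝ)..a, f s) ≤ C * (b - a) := by
  rw [prim_sub hf h0 h1 a b]
  calc ∫ s in a..b, f s ≤ ∫ _s in a..b, C := by
        apply intervalIntegral.integral_mono_on hab (iint_of_bdd hf h0 h1 a b)
          intervalIntegrable_const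
        intro u _; exact h1 u
    _ = C * (b - a) := by simp [mul_comm]

lemma prim_cont (hf : Measurable f) (h0 : ∀ s, 0 ≤ f s) (h1 : ∀ s, f s ≤ C) :
    Continuous (fun t => ∫ s in (0:ℝ)..t, f s) :=
  intervalIntegral.continuous_primitive (fun a b => iint_of_bdd hf h0 h1 a b) 0

lemma exp_prod_bdd (hf : Measurable f) (h0 : ∀ s, 0 ≤ f s) (h1 : ∀ s, f s ≤ C)
    (hneg : ∀ s, s < 0 → f s = 0) (s : ℝ) :
    f s * Real.exp (-(∫ u in (0:ℝ)..s, f u)) ≤ C := by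
  have hC : 0 ≤ C := le_trans (h0 0) (h1 0)
  rcases lt_or_ge s 0 with h | h
  · rw [hneg s h, zero_mul]; exact hC
  · have h2 : Real.exp (-(∫ u in (0:ℝ)..s, f u)) ≤ 1 := by
      rw [Real.exp_le_one_iff, neg_nonpos]
      exact prim_nonneg h0 h
    calc f s * Real.exp (-(∫ u in (0:ℝ)..s, f u)) ≤ C * 1 :=
        mul_le_mul (h1 s) h2 (Real.exp_nonneg _) hC
      _ = C := mul_one C

lemma iint_exp_prod (hf : Measurable f) (h0 : ∀ s, 0 ≤ f s) (h1 : ∀ s, f s ≤ C)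
    (hneg : ∀ s, s < 0 → f s = 0) (a b : ℝ) :
    IntervalIntegrable (fun s => f s * Real.exp (-(∫ u in (0:ℝ)..s, f u))) volume a b := by
  apply iint_of_bdd (C := C)
  · exact hf.mul ((prim_cont hf h0 h1).neg.rexp.measurable)
  · exact fun s => mul_nonneg (h0 s) (Real.exp_nonneg _)
  · exact exp_prod_bdd hf h0 h1 hneg

/-- Key bound: `∫₀ᵗ f e^{-F} ≤ 1` where `F` is the primitive of `f`. -/
lemma key_exp_bound (hf : Measurable f) (h0 : ∀ s, 0 ≤ f s) (h1 : ∀ s, f s ≤ C)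
    (hneg : ∀ s, s < 0 → f s = 0) {t : ℝ} (ht : 0 ≤ t) :
    (∫ s in (0:ℝ)..t, f s * Real.exp (-(∫ u in (0:ℝ)..s, f u))) ≤ 1 := by
  have hC : 0 ≤ C := le_trans (h0 0) (h1 0)
  set F : ℝ → ℝ := fun t => ∫ s in (0:ℝ)..t, f s with hF
  have main : ∀ n : ℕ, 0 < n →
      (∫ s in (0:ℝ)..t, f s * Real.exp (-(F s))) ≤ Real.exp (C * t / n) := by
    intro n hn
    set a : ℕ → ℝ := fun k => k * t / n with ha
    have ha0 : a 0 = 0 := by simp [ha]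
    have han : a n = t := by
      simp only [ha]; field_simp [(Nat.cast_pos.mpr hn).ne']
    have hstep : ∀ k : ℕ, a (k+1) - a k = t / n := by
      intro k; simp only [ha]; push_cast; ring
    have hmono : ∀ k : ℕ, a k ≤ a (k+1) := by
      intro k
      have : (0:ℝ) ≤ t / n := by positivity
      nlinarith [hstep k]
    have hanonneg : ∀ k : ℕ, 0 ≤ a k := by
      intro k; have : (0:ℝ) ≤ (k:ℝ) * t := by positivity
      simp only [ha]; positivity
    have hsplit : (∫ s in (0:ℝ)..t, f s * Real.exp (-(F s)))
        = ∑ k ∈ Finset.range n, ∫ s in a k..a (k+1), f s * Real.exp (-(F s)) := by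
      rw [intervalIntegral.sum_integral_adjacent_intervals
        (fun k _ => iint_exp_prod hf h0 h1 hneg (a k) (a (k+1))), ha0, han]
    rw [hsplit]
    have pieces : ∀ k : ℕ,
        (∫ s in a k..a (k+1), f s * Real.exp (-(F s)))
          ≤ Real.exp (C * t / n) * (Real.exp (-(F (a k))) - Real.exp (-(F (a (k+1))))) := by
      intro k
      have hx0 : 0 ≤ F (a (k+1)) - F (a k) := by
        have := prim_mono hf h0 h1 (hmono k); linarith
      have hxc : F (a (k+1)) - F (a k) ≤ C * t / n := by
        have := prim_sub_le hf h0 h1 (hmono k)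
        rw [hstep k] at this
        calc F (a (k+1)) - F (a k) ≤ C * (t/n) := this
          _ = C * t / n := by ring
      have step1 : (∫ s in a k..a (k+1), f s * Real.exp (-(F s)))
          ≤ Real.exp (-(F (a k))) * (F (a (k+1)) - F (a k)) := by
        calc (∫ s in a k..a (k+1), f s * Real.exp (-(F s)))
            ≤ ∫ s in a k..a (k+1), f s * Real.exp (-(F (a k))) := by
              apply intervalIntegral.integral_mono_on (hmono k)
                (iint_exp_prod hf h0 h1 hneg _ _)
                ((iint_of_bdd hf h0 h1 _ _).mul_const _)
              intro u hu
              apply mul_le_mul_of_nonneg_left _ (h0 u)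
              apply Real.exp_le_exp.2
              simp only [neg_le_neg_iff]
              exact prim_mono hf h0 h1 hu.1
          _ = Real.exp (-(F (a k))) * (F (a (k+1)) - F (a k)) := by
              rw [intervalIntegral.integral_mul_const, prim_sub hf h0 h1]; ring
      refine le_trans step1 ?_
      -- x ≤ e^c (1 - e^{-x}) for 0 ≤ x ≤ c
      set x := F (a (k+1)) - F (a k) with hxdef
      have hxe : x ≤ Real.exp (C * t / n) * (1 - Real.exp (-x)) := by
        have h3 : x * Real.exp (-x) ≤ 1 - Real.exp (-x) := by
          have := Real.add_one_le_exp x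
          have hex : 0 < Real.exp (-x) := Real.exp_pos _
          have : (x + 1) * Real.exp (-x) ≤ Real.exp x * Real.exp (-x) :=
            mul_le_mul_of_nonneg_right this hex.le
          rw [← Real.exp_add, add_neg_cancel, Real.exp_zero] at this
          linarith [this]
        have h4 : Real.exp (-(C * t / n)) ≤ Real.exp (-x) := by
          apply Real.exp_le_exp.2; linarith
        have h5 : x * Real.exp (-(C * t / n)) ≤ 1 - Real.exp (-x) := by
          nlinarith [Real.exp_pos (-(C*t/n)), Real.exp_pos (-x)]
        have h6 := mul_le_mul_of_nonneg_left h5 (Real.exp_pos (C*t/n)).le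
        rw [show Real.exp (C*t/n) * (x * Real.exp (-(C*t/n))) = x * (Real.exp (C*t/n) * Real.exp (-(C*t/n))) by ring,
          ← Real.exp_add, add_neg_cancel, Real.exp_zero, mul_one] at h6
        exact h6
      calc Real.exp (-(F (a k))) * x
          ≤ Real.exp (-(F (a k))) * (Real.exp (C * t / n) * (1 - Real.exp (-x))) :=
            mul_le_mul_of_nonneg_left hxe (Real.exp_nonneg _)
        _ = Real.exp (C*t/n) * (Real.exp (-(F (a k))) - Real.exp (-(F (a k))) * Real.exp (-x)) := by ring
        _ = Real.exp (C*t/n) * (Real.exp (-(F (a k))) - Real.exp (-(F (a (k+1))))) := by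
            rw [← Real.exp_add]
            congr 2
            rw [hxdef]; ring_nf
    calc ∑ k ∈ Finset.range n, ∫ s in a k..a (k+1), f s * Real.exp (-(F s))
        ≤ ∑ k ∈ Finset.range n,
            Real.exp (C * t / n) * (Real.exp (-(F (a k))) - Real.exp (-(F (a (k+1))))) :=
          Finset.sum_le_sum (fun k _ => pieces k)
      _ = Real.exp (C * t / n) * (Real.exp (-(F (a 0))) - Real.exp (-(F (a n)))) := by
          rw [← Finset.mul_sum, Finset.sum_range_sub' (fun k => Real.exp (-(F (a k))))]
      _ ≤ Real.exp (C * t / n) * 1 := by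
          apply mul_le_mul_of_nonneg_left _ (Real.exp_nonneg _)
          have h7 : F (a 0) = 0 := by rw [ha0]; simp [hF]
          have h8 : 0 ≤ Real.exp (-(F (a n))) := Real.exp_nonneg _
          rw [h7]; simp; linarith
      _ = Real.exp (C * t / n) := mul_one _
  have hlim : Filter.Tendsto (fun n : ℕ => Real.exp (C * t / n)) Filter.atTop
      (nhds 1) := by
    rw [show (1:ℝ) = Real.exp 0 by simp]
    exact (Real.continuous_exp.tendsto 0).comp (tendsto_const_div_atTop_nhds_zero_nat (C*t))
  apply ge_of_tendsto hlim
  filter_upwards [Filter.eventually_gt_atTop 0] with n hn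
  exact main n hn

end Prim
section Main

variable {q d : ℕ} {ts : ℕ → ℝ} {Clam : ℝ} {lam : ℕ → ℝ → ℝ} {Q : ℕ → ℕ → ℝ → ℝ}
  {fW : (Fin d → ℝ) → ℝ} {phi : ℕ → Fin d → ℝ} {v : (ℕ → ℝ) → ℝ} {Cv lv : ℝ}

/-- truncation of the rates to `[0,∞)`. -/
def ltil (lam : ℕ → ℝ → ℝ) (i : ℕ) (s : ℝ) : ℝ := if 0 ≤ s then lam i s else 0

/-- observation kernel density. -/
def gk (q d : ℕ) (Q : ℕ → ℕ → ℝ → ℝ) (fW : (Fin d → ℝ) → ℝ) (phi : ℕ → Fin d → ℝ)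
    (i : ℕ) (s : ℝ) (y : Fin d → ℝ) : ℝ :=
  ∑ j ∈ Finset.Icc 1 q, Q i j s * fW (y - phi j)

/-- inner integral in `Iop`. -/
def Wf (q d : ℕ) (ts : ℕ → ℝ) (lam : ℕ → ℝ → ℝ) (Q : ℕ → ℕ → ℝ → ℝ)
    (fW : (Fin d → ℝ) → ℝ) (phi : ℕ → Fin d → ℝ) (v : (ℕ → ℝ) → ℝ)
    (p : ℕ → ℝ) (i : ℕ) (s : ℝ) : ℝ :=
  ∫ y : Fin d → ℝ, v (Psi q d ts lam Q fW phi p y s) * gk q d Q fW phi i s y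

/-- clean fixed-`m` filter update. -/
def Psi2 (q d : ℕ) (ts : ℕ → ℝ) (lam : ℕ → ℝ → ℝ) (Q : ℕ → ℕ → ℝ → ℝ)
    (fW : (Fin d → ℝ) → ℝ) (phi : ℕ → Fin d → ℝ)
    (m : ℕ) (p : ℕ → ℝ) (y : Fin d → ℝ) (s : ℝ) : ℕ → ℝ :=
  if 0 < psiBar q d ts lam Q fW phi m p y s then
    fun j => psiNum q d ts lam Q fW phi m p y s j / psiBar q d ts lam Q fW phi m p y s
  else p

/-- clean fixed-`m` inner integral. -/
def W2 (q d : ℕ) (ts : ℕ → ℝ) (lam : ℕ → ℝ → ℝ) (Q : ℕ → ℕ → ℝ → ℝ)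
    (fW : (Fin d → ℝ) → ℝ) (phi : ℕ → Fin d → ℝ) (v : (ℕ → ℝ) → ℝ)
    (m : ℕ) (p : ℕ → ℝ) (i : ℕ) (s : ℝ) : ℝ :=
  ∫ y : Fin d → ℝ, v (Psi2 q d ts lam Q fW phi m p y s) * gk q d Q fW phi i s y

section LamFacts

variable (hClam : 0 ≤ Clam) (hlam_meas : ∀ i, Measurable (lam i))
  (hlam_bd : ∀ i s, 0 ≤ s → lam i s ∈ Set.Icc 0 Clam)

include hlam_meas in
lemma ltil_meas (i : ℕ) : Measurable (ltil lam i) :=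
  Measurable.ite measurableSet_Ici (hlam_meas i) measurable_const

include hlam_bd in
lemma ltil_nonneg (i : ℕ) (s : ℝ) : 0 ≤ ltil lam i s := by
  unfold ltil; split_ifs with h
  · exact (hlam_bd i s h).1
  · rfl

include hClam hlam_bd in
lemma ltil_le (i : ℕ) (s : ℝ) : ltil lam i s ≤ Clam := by
  unfold ltil; split_ifs with h
  · exact (hlam_bd i s h).2
  · exact hClam

lemma ltil_neg (i : ℕ) (s : ℝ) (hs : s < 0) : ltil lam i s = 0 := by
  unfold ltil; rw [if_neg (not_le.2 hs)]

lemma ltil_eq (i : ℕ) (s : ℝ) (hs : 0 ≤ s) : ltil lam i s = lam i s := by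
  unfold ltil; rw [if_pos hs]

lemma Lam_ltil_eq (i : ℕ) {t : ℝ} (ht : 0 ≤ t) : Lam lam i t = Lam (ltil lam) i t := by
  unfold Lam
  apply intervalIntegral.integral_congr
  intro u hu
  rw [Set.uIcc_of_le ht] at hu
  exact (ltil_eq i u hu.1).symm

include hClam hlam_meas hlam_bd in
lemma Lam_nonneg (i : ℕ) {t : ℝ} (ht : 0 ≤ t) : 0 ≤ Lam lam i t := by
  rw [Lam_ltil_eq i ht]
  exact prim_nonneg (ltil_nonneg hlam_bd i) ht

include hClam hlam_meas hlam_bd in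
lemma exp_Lam_le_one (i : ℕ) {s : ℝ} (hs : 0 ≤ s) : Real.exp (-(Lam lam i s)) ≤ 1 := by
  rw [Real.exp_le_one_iff, neg_nonpos]
  exact Lam_nonneg hClam hlam_meas hlam_bd i hs

include hClam hlam_meas hlam_bd in
lemma cl_nonneg (i : ℕ) {s : ℝ} (hs : 0 ≤ s) :
    0 ≤ lam i s * Real.exp (-(Lam lam i s)) :=
  mul_nonneg (hlam_bd i s hs).1 (Real.exp_nonneg _)

include hClam hlam_meas hlam_bd in
lemma cl_le (i : ℕ) {s : ℝ} (hs : 0 ≤ s) :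
    lam i s * Real.exp (-(Lam lam i s)) ≤ Clam := by
  calc lam i s * Real.exp (-(Lam lam i s)) ≤ Clam * 1 :=
      mul_le_mul (hlam_bd i s hs).2 (exp_Lam_le_one hClam hlam_meas hlam_bd i hs)
        (Real.exp_nonneg _) hClam
    _ = Clam := mul_one _

include hClam hlam_meas hlam_bd in
lemma cl_eq_ltil (i : ℕ) {s : ℝ} (hs : 0 ≤ s) :
    lam i s * Real.exp (-(Lam lam i s)) = ltil lam i s * Real.exp (-(Lam (ltil lam) i s)) := by
  rw [ltil_eq i s hs, Lam_ltil_eq i hs]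

include hClam hlam_meas hlam_bd in
lemma integrableOn_cl (i : ℕ) {a b : ℝ} (ha : 0 ≤ a) :
    IntegrableOn (fun s => lam i s * Real.exp (-(Lam lam i s))) (Set.Ioc a b) volume := by
  rcases le_total a b with hab | hab
  · have h1 : IntervalIntegrable (fun s => ltil lam i s * Real.exp (-(Lam (ltil lam) i s)))
        volume a b := iint_exp_prod (ltil_meas hlam_meas i) (ltil_nonneg hlam_bd i)
        (ltil_le hClam hlam_bd i) (ltil_neg i) a b
    rw [intervalIntegrable_iff, Set.uIoc_of_le hab] at h1
    apply h1.congr_fun _ measurableSet_Ioc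
    intro s hs
    exact (cl_eq_ltil hClam hlam_meas hlam_bd i (le_trans ha hs.1.le)).symm
  · rw [Set.Ioc_eq_empty (by exact fun h => absurd hab (not_le.2 h))]
    exact integrableOn_empty

include hClam hlam_meas hlam_bd in
lemma int_cl_le_one (i : ℕ) {t : ℝ} (ht : 0 ≤ t) :
    (∫ s in Set.Ioc 0 t, lam i s * Real.exp (-(Lam lam i s))) ≤ 1 := by
  have h1 : (∫ s in Set.Ioc 0 t, lam i s * Real.exp (-(Lam lam i s)))
      = ∫ s in Set.Ioc 0 t, ltil lam i s * Real.exp (-(Lam (ltil lam) i s)) := by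
    apply setIntegral_congr_fun measurableSet_Ioc
    intro s hs
    exact cl_eq_ltil hClam hlam_meas hlam_bd i hs.1.le
  rw [h1, ← intervalIntegral.integral_of_le ht]
  exact key_exp_bound (ltil_meas hlam_meas i) (ltil_nonneg hlam_bd i)
    (ltil_le hClam hlam_bd i) (ltil_neg i) ht

end LamFacts

section GkFacts

variable (hQ_meas : ∀ i j, Measurable (Q i j))
  (hQ_bd : ∀ i j s, 0 ≤ s → Q i j s ∈ Set.Icc (0:ℝ) 1)
  (hQ_sum : ∀ i s, 0 ≤ s → ∑ j ∈ Finset.Icc 1 q, Q i j s = 1)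
  (hfW_meas : Measurable fW) (hfW_nonneg : ∀ y, 0 ≤ fW y)
  (hfW_int : ∫ y : Fin d → ℝ, fW y = 1)

include hfW_meas hfW_int in
lemma fW_integrable : Integrable fW (volume : Measure (Fin d → ℝ)) := by
  by_contra h
  rw [integral_undef h] at hfW_int
  exact one_ne_zero hfW_int.symm

include hQ_bd hfW_nonneg in
lemma gk_nonneg (i : ℕ) {s : ℝ} (hs : 0 ≤ s) (y : Fin d → ℝ) :
    0 ≤ gk q d Q fW phi i s y :=
  Finset.sum_nonneg fun j _ => mul_nonneg (hQ_bd i j s hs).1 (hfW_nonneg _)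

include hfW_meas hfW_int in
lemma gk_integrable (i : ℕ) (s : ℝ) :
    Integrable (gk q d Q fW phi i s) (volume : Measure (Fin d → ℝ)) := by
  apply integrable_finset_sum
  intro j _
  exact ((fW_integrable hfW_meas hfW_int).comp_sub_right (phi j)).const_mul _

include hQ_sum hfW_meas hfW_int in
lemma gk_integral (i : ℕ) {s : ℝ} (hs : 0 ≤ s) :
    (∫ y : Fin d → ℝ, gk q d Q fW phi i s y) = 1 := by
  unfold gk
  rw [integral_finset_sum _ (fun j _ =>
    ((fW_integrable hfW_meas hfW_int).comp_sub_right (phi j)).const_mul _)]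
  have : ∀ j ∈ Finset.Icc 1 q, (∫ y : Fin d → ℝ, Q i j s * fW (y - phi j)) = Q i j s := by
    intro j _
    rw [integral_const_mul, integral_sub_right_eq_self fW (phi j), hfW_int, mul_one]
  rw [Finset.sum_congr rfl this, hQ_sum i s hs]

include hQ_meas hfW_meas in
lemma gk_meas_joint (i : ℕ) :
    Measurable (fun z : ℝ × (Fin d → ℝ) => gk q d Q fW phi i z.1 z.2) := by
  apply Finset.measurable_sum
  intro j _
  exact ((hQ_meas i j).comp measurable_fst).mul
    (hfW_meas.comp (measurable_snd.sub measurable_const))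

end GkFacts



section SimplexFacts

lemma mem1_coord {p : ℕ → ℝ} (hp : mem1 q p) {i : ℕ} (hi : 1 ≤ i) (hiq : i ≤ q) : 0 ≤ p i :=
  hp.1 i (Finset.mem_Icc.2 ⟨hi, hiq⟩)

lemma mem1_normalized {a : ℕ → ℝ} (ha : ∀ j ∈ Finset.Icc 1 q, 0 ≤ a j)
    (hA : 0 < ∑ j ∈ Finset.Icc 1 q, a j) :
    mem1 q (fun j => a j / ∑ k ∈ Finset.Icc 1 q, a k) := by
  constructor
  · intro i hi
    exact div_nonneg (ha i hi) hA.le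
  · rw [← Finset.sum_div, div_self (ne_of_gt hA)]

end SimplexFacts

section PsiFacts

variable (hts0 : ts 0 = 0) (htsmono : ∀ i, i < q → ts i ≤ ts (i + 1))
  (hClam : 0 ≤ Clam) (hlam_bd : ∀ i s, 0 ≤ s → lam i s ∈ Set.Icc 0 Clam)
  (hQ_bd : ∀ i j s, 0 ≤ s → Q i j s ∈ Set.Icc (0:ℝ) 1)
  (hfW_nonneg : ∀ y, 0 ≤ fW y)

include hts0 htsmono in
lemma ts_nonneg {i : ℕ} (hi : i ≤ q) : 0 ≤ ts i := by
  rw [← hts0]; exact ts_mono' htsmono (Nat.zero_le i) hi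

include hlam_bd hQ_bd hfW_nonneg in
lemma psiNum_nonneg {p : ℕ → ℝ} (hp : mem1 q p) {s : ℝ} (hs : 0 ≤ s)
    (m : ℕ) (y : Fin d → ℝ) (j : ℕ) :
    0 ≤ psiNum q d ts lam Q fW phi m p y s j := by
  apply Finset.sum_nonneg
  intro i hi
  rw [Finset.mem_Icc] at hi
  have hpi : 0 ≤ p i := mem1_coord hp (by omega) hi.2
  have := (hlam_bd i s hs).1
  have := (hQ_bd i j s hs).1
  have := hfW_nonneg (y - phi j)
  positivity

lemma psiBar_eq (m : ℕ) (p : ℕ → ℝ) (y : Fin d → ℝ) (s : ℝ) :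
    psiBar q d ts lam Q fW phi m p y s
      = ∑ k ∈ Finset.Icc 1 q, psiNum q d ts lam Q fW phi m p y s k := rfl

include hlam_bd hQ_bd hfW_nonneg in
lemma psiBar_nonneg {p : ℕ → ℝ} (hp : mem1 q p) {s : ℝ} (hs : 0 ≤ s)
    (m : ℕ) (y : Fin d → ℝ) :
    0 ≤ psiBar q d ts lam Q fW phi m p y s :=
  Finset.sum_nonneg fun j _ => psiNum_nonneg hlam_bd hQ_bd hfW_nonneg hp hs m y j

include hts0 htsmono in
/-- On the open inter-jump interval, `Psi` is the fixed-`m` clean update. -/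
lemma Psi_on_Ioo {m : ℕ} (hm : m < q) {s : ℝ} (h1 : ts m < s) (h2 : s < ts (m+1))
    (p : ℕ → ℝ) (y : Fin d → ℝ) :
    Psi q d ts lam Q fW phi p y s = Psi2 q d ts lam Q fW phi m p y s := by
  have huniq : ∀ k, k < q ∧ ts k < s ∧ s < ts (k+1) → k = m := by
    rintro k ⟨hkq, hk1, hk2⟩
    by_contra hne
    rcases Nat.lt_or_ge k m with h | h
    · have : ts (k+1) ≤ ts m := ts_mono' htsmono (by omega) hm.le
      linarith
    · have hkm : m < k := by omega
      have : ts (m+1) ≤ ts k := ts_mono' htsmono (by omega) hkq.le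
      linarith
  have hne : ¬ ∃ k, 1 ≤ k ∧ k ≤ q ∧ s = ts k := by
    rintro ⟨k, hk1, hkq, rfl⟩
    rcases Nat.lt_or_ge k (m+1) with h | h
    · have : ts k ≤ ts m := ts_mono' htsmono (by omega) hm.le
      linarith
    · have : ts (m+1) ≤ ts k := ts_mono' htsmono h hkq
      linarith
  have hex : ∃ k, k < q ∧ ts k < s ∧ s < ts (k+1) := ⟨m, hm, h1, h2⟩
  have hinf : sInf {k | k < q ∧ ts k < s ∧ s < ts (k+1)} = m :=
    huniq _ (Nat.sInf_mem (⟨m, hm, h1, h2⟩ : Set.Nonempty {k | k < q ∧ ts k < s ∧ s < ts (k+1)}))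
  simp only [Psi, if_neg hne, if_pos hex, hinf]
  rfl

include hts0 htsmono hlam_bd hQ_bd hfW_nonneg in
/-- `Psi` stays in the simplex. -/
lemma mem1_Psi {p : ℕ → ℝ} (hp : mem1 q p) (y : Fin d → ℝ) (s : ℝ) :
    mem1 q (Psi q d ts lam Q fW phi p y s) := by
  simp only [Psi]
  split_ifs with hc1 hc2 hc3 hc4
  · obtain ⟨k, hk⟩ := hc1
    have hmem := Nat.sInf_mem (⟨k, hk⟩ : Set.Nonempty {m | 1 ≤ m ∧ m ≤ q ∧ s = ts m})
    have htm : 0 ≤ ts (sInf {m | 1 ≤ m ∧ m ≤ q ∧ s = ts m}) :=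
      ts_nonneg hts0 htsmono hmem.2.1
    exact mem1_normalized (q := q)
      (a := fun j => Q (sInf {m | 1 ≤ m ∧ m ≤ q ∧ s = ts m}) j
        (ts (sInf {m | 1 ≤ m ∧ m ≤ q ∧ s = ts m})) * fW (y - phi j))
      (fun j _ => mul_nonneg (hQ_bd _ j _ htm).1 (hfW_nonneg _)) hc2
  · exact hp
  · obtain ⟨k, hk⟩ := hc3
    have hmem := Nat.sInf_mem (⟨k, hk⟩ : Set.Nonempty {m | m < q ∧ ts m < s ∧ s < ts (m+1)})
    have hs : 0 ≤ s := le_trans (ts_nonneg hts0 htsmono hmem.1.le) hmem.2.1.le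
    exact mem1_normalized (q := q)
      (a := fun j => psiNum q d ts lam Q fW phi (sInf {m | m < q ∧ ts m < s ∧ s < ts (m+1)}) p y s j)
      (fun j _ => psiNum_nonneg hlam_bd hQ_bd hfW_nonneg hp hs _ y j) hc4
  · exact hp
  · exact hp

include hlam_bd hQ_bd hfW_nonneg in
/-- Same for the clean update. -/
lemma mem1_Psi2 {p : ℕ → ℝ} (hp : mem1 q p) {s : ℝ} (hs : 0 ≤ s) (m : ℕ) (y : Fin d → ℝ) :
    mem1 q (Psi2 q d ts lam Q fW phi m p y s) := by
  unfold Psi2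
  split_ifs with h
  · exact mem1_normalized (q := q)
      (a := fun j => psiNum q d ts lam Q fW phi m p y s j)
      (fun j _ => psiNum_nonneg hlam_bd hQ_bd hfW_nonneg hp hs m y j) h
  · exact hp
end PsiFacts

section MeasFacts

variable (hts0 : ts 0 = 0) (htsmono : ∀ i, i < q → ts i ≤ ts (i + 1))
  (hClam : 0 ≤ Clam) (hlam_meas : ∀ i, Measurable (lam i))
  (hlam_bd : ∀ i s, 0 ≤ s → lam i s ∈ Set.Icc 0 Clam)
  (hQ_meas : ∀ i j, Measurable (Q i j))
  (hQ_bd : ∀ i j s, 0 ≤ s → Q i j s ∈ Set.Icc (0:ℝ) 1)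
  (hQ_sum : ∀ i s, 0 ≤ s → ∑ j ∈ Finset.Icc 1 q, Q i j s = 1)
  (hfW_meas : Measurable fW) (hfW_nonneg : ∀ y, 0 ≤ fW y)
  (hfW_int : ∫ y : Fin d → ℝ, fW y = 1)
  (hv_meas : Measurable v) (hCv : 0 ≤ Cv)
  (hv_bd : ∀ p, mem1 q p → |v p| ≤ Cv)

include hClam hlam_meas hlam_bd in
lemma Lam_ltil_cont (i : ℕ) : Continuous (Lam (ltil lam) i) :=
  prim_cont (ltil_meas hlam_meas i) (ltil_nonneg hlam_bd i) (ltil_le hClam hlam_bd i)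

include hClam hlam_meas hlam_bd in
lemma cl_ltil_meas (i : ℕ) :
    Measurable (fun s => ltil lam i s * Real.exp (-(Lam (ltil lam) i s))) :=
  (ltil_meas hlam_meas i).mul
    (Real.continuous_exp.comp (Lam_ltil_cont hClam hlam_meas hlam_bd i).neg).measurable

include hClam hlam_bd in
lemma psiNum_ltil_eq {s : ℝ} (hs : 0 ≤ s) (m : ℕ) (p : ℕ → ℝ) (y : Fin d → ℝ) (j : ℕ) :
    psiNum q d ts lam Q fW phi m p y s j = psiNum q d ts (ltil lam) Q fW phi m p y s j := by
  unfold psiNum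
  apply Finset.sum_congr rfl
  intro i _
  rw [ltil_eq i s hs, Lam_ltil_eq i hs]

include hClam hlam_bd in
lemma psiBar_ltil_eq {s : ℝ} (hs : 0 ≤ s) (m : ℕ) (p : ℕ → ℝ) (y : Fin d → ℝ) :
    psiBar q d ts lam Q fW phi m p y s = psiBar q d ts (ltil lam) Q fW phi m p y s := by
  unfold psiBar
  exact Finset.sum_congr rfl fun k _ => psiNum_ltil_eq hClam hlam_bd hs m p y k

include hClam hlam_bd in
lemma Psi2_ltil_eq {s : ℝ} (hs : 0 ≤ s) (m : ℕ) (p : ℕ → ℝ) (y : Fin d → ℝ) :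
    Psi2 q d ts lam Q fW phi m p y s = Psi2 q d ts (ltil lam) Q fW phi m p y s := by
  unfold Psi2
  rw [psiBar_ltil_eq hClam hlam_bd hs m p y]
  split_ifs with h
  · funext j
    rw [psiNum_ltil_eq hClam hlam_bd hs m p y j]
  · rfl

include hClam hlam_meas hlam_bd hQ_meas hfW_meas in
lemma meas_psiNum_joint (m : ℕ) (p : ℕ → ℝ) (j : ℕ) :
    Measurable (fun z : ℝ × (Fin d → ℝ) =>
      psiNum q d ts (ltil lam) Q fW phi m p z.2 z.1 j) := by
  unfold psiNum
  apply Finset.measurable_sum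
  intro i _
  exact ((((measurable_const.mul ((ltil_meas hlam_meas i).comp measurable_fst)).mul
    (((Real.continuous_exp.comp (Lam_ltil_cont hClam hlam_meas hlam_bd i).neg).measurable).comp
      measurable_fst)).mul ((hQ_meas i j).comp measurable_fst)).mul
    (hfW_meas.comp (measurable_snd.sub measurable_const)))

include hClam hlam_meas hlam_bd hQ_meas hfW_meas in
lemma meas_psiBar_joint (m : ℕ) (p : ℕ → ℝ) :
    Measurable (fun z : ℝ × (Fin d → ℝ) =>
      psiBar q d ts (ltil lam) Q fW phi m p z.2 z.1) := by
  unfold psiBar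
  exact Finset.measurable_sum _
    (fun k _ => meas_psiNum_joint hClam hlam_meas hlam_bd hQ_meas hfW_meas m p k)

include hClam hlam_meas hlam_bd hQ_meas hfW_meas in
lemma meas_Psi2_joint (m : ℕ) (p : ℕ → ℝ) :
    Measurable (fun z : ℝ × (Fin d → ℝ) =>
      Psi2 q d ts (ltil lam) Q fW phi m p z.2 z.1) := by
  unfold Psi2
  apply Measurable.ite
  · exact measurableSet_lt measurable_const
      (meas_psiBar_joint hClam hlam_meas hlam_bd hQ_meas hfW_meas m p)
  · apply measurable_pi_lambda
    intro j
    exact (meas_psiNum_joint hClam hlam_meas hlam_bd hQ_meas hfW_meas m p j).div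
      (meas_psiBar_joint hClam hlam_meas hlam_bd hQ_meas hfW_meas m p)
  · exact measurable_const

include hClam hlam_meas hlam_bd hQ_meas hfW_meas hv_meas in
lemma meas_W2 (m : ℕ) (p : ℕ → ℝ) (i : ℕ) :
    Measurable (fun s : ℝ => W2 q d ts (ltil lam) Q fW phi v m p i s) := by
  have h : StronglyMeasurable (fun z : ℝ × (Fin d → ℝ) =>
      v (Psi2 q d ts (ltil lam) Q fW phi m p z.2 z.1) * gk q d Q fW phi i z.1 z.2) :=
    ((hv_meas.comp (meas_Psi2_joint hClam hlam_meas hlam_bd hQ_meas hfW_meas m p)).mul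
      (gk_meas_joint hQ_meas hfW_meas i)).stronglyMeasurable
  exact h.integral_prod_right'.measurable

include hts0 htsmono hClam hlam_bd hQ_bd hfW_nonneg hfW_meas hfW_int hv_bd hCv in
lemma Wf_bound {p : ℕ → ℝ} (hp : mem1 q p) (i : ℕ) {s : ℝ} (hs : 0 ≤ s)
    (hQ_sum : ∀ i s, 0 ≤ s → ∑ j ∈ Finset.Icc 1 q, Q i j s = 1) :
    |Wf q d ts lam Q fW phi v p i s| ≤ Cv := by
  unfold Wf
  rw [← Real.norm_eq_abs]
  calc ‖∫ y : Fin d → ℝ, v (Psi q d ts lam Q fW phi p y s) * gk q d Q fW phi i s y‖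
      ≤ ∫ y : Fin d → ℝ, ‖v (Psi q d ts lam Q fW phi p y s) * gk q d Q fW phi i s y‖ :=
        norm_integral_le_integral_norm _
    _ ≤ ∫ y : Fin d → ℝ, Cv * gk q d Q fW phi i s y := by
        apply integral_mono_of_nonneg (ae_of_all _ fun y => norm_nonneg _)
          ((gk_integrable hfW_meas hfW_int i s).const_mul Cv) (ae_of_all _ fun y => ?_)
        show ‖v (Psi q d ts lam Q fW phi p y s) * gk q d Q fW phi i s y‖
          ≤ Cv * gk q d Q fW phi i s y
        have hg := gk_nonneg (q := q) (phi := phi) hQ_bd hfW_nonneg i hs y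
        rw [norm_mul, Real.norm_eq_abs, Real.norm_eq_abs, abs_of_nonneg hg]
        exact mul_le_mul_of_nonneg_right
          (hv_bd _ (mem1_Psi hts0 htsmono hlam_bd hQ_bd hfW_nonneg hp y s)) hg
    _ = Cv * 1 := by rw [integral_const_mul, gk_integral hQ_sum hfW_meas hfW_int i hs]
    _ = Cv := mul_one _

include hts0 htsmono hClam hlam_bd in
lemma Wf_eq_W2 {m : ℕ} (hm : m < q) {s : ℝ} (h1 : ts m < s) (h2 : s < ts (m+1))
    (p : ℕ → ℝ) (i : ℕ) :
    Wf q d ts lam Q fW phi v p i s = W2 q d ts (ltil lam) Q fW phi v m p i s := by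
  have hs : 0 ≤ s := le_trans (ts_nonneg hts0 htsmono hm.le) h1.le
  unfold Wf W2
  congr 1
  funext y
  rw [Psi_on_Ioo hts0 htsmono hm h1 h2, Psi2_ltil_eq hClam hlam_bd hs m p y]

end MeasFacts

section IntFacts

variable (hts0 : ts 0 = 0) (htsmono : ∀ i, i < q → ts i ≤ ts (i + 1))
  (hClam : 0 ≤ Clam) (hlam_meas : ∀ i, Measurable (lam i))
  (hlam_bd : ∀ i s, 0 ≤ s → lam i s ∈ Set.Icc 0 Clam)
  (hQ_meas : ∀ i j, Measurable (Q i j))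
  (hQ_bd : ∀ i j s, 0 ≤ s → Q i j s ∈ Set.Icc (0:ℝ) 1)
  (hQ_sum : ∀ i s, 0 ≤ s → ∑ j ∈ Finset.Icc 1 q, Q i j s = 1)
  (hfW_meas : Measurable fW) (hfW_nonneg : ∀ y, 0 ≤ fW y)
  (hfW_int : ∫ y : Fin d → ℝ, fW y = 1)
  (hv_meas : Measurable v) (hCv : 0 ≤ Cv)
  (hv_bd : ∀ p, mem1 q p → |v p| ≤ Cv)

include hts0 htsmono in
/-- every point of `(0, ts q]` off the (finite) jump-time set lies in some open
inter-jump interval. -/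
lemma exists_Ioo {s : ℝ} (hs0 : 0 < s) (hsq : s ≤ ts q)
    (hbad : s ∉ ts '' (Set.Iic q)) :
    ∃ m, m < q ∧ ts m < s ∧ s < ts (m + 1) := by
  classical
  set P : ℕ → Prop := fun k => ts k < s with hP
  have hP0 : P 0 := by rw [hP]; simp [hts0]; exact hs0
  set m := Nat.findGreatest P q with hmdef
  have hm0 : P m := Nat.findGreatest_spec (Nat.zero_le q) hP0
  have hmle : m ≤ q := Nat.findGreatest_le q
  have hmq : m < q := by
    rcases Nat.lt_or_ge m q with h | h
    · exact h
    · exfalso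
      have : m = q := le_antisymm hmle h
      rw [this] at hm0
      exact absurd hsq (not_le.2 hm0)
  refine ⟨m, hmq, hm0, ?_⟩
  have hle : s ≤ ts (m + 1) := by
    by_contra h
    push_neg at h
    have : m + 1 ≤ Nat.findGreatest P q := Nat.le_findGreatest (by omega) h
    omega
  have hne : s ≠ ts (m + 1) := by
    intro h
    exact hbad ⟨m + 1, by simpa using hmq, h.symm⟩
  exact lt_of_le_of_ne hle hne

include hts0 htsmono hClam hlam_meas hlam_bd hQ_meas hQ_bd hfW_meas hfW_nonneg hv_meas in
lemma aesm_clWf (p : ℕ → ℝ) (i : ℕ) :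
    AEStronglyMeasurable
      (fun s => lam i s * Real.exp (-(Lam lam i s)) * Wf q d ts lam Q fW phi v p i s)
      (volume.restrict (Set.Ioc 0 (ts q))) := by
  classical
  set G' : ℝ → ℝ := fun s => ∑ m ∈ Finset.range q,
    (Set.Ioo (ts m) (ts (m+1))).indicator
      (fun u => ltil lam i u * Real.exp (-(Lam (ltil lam) i u)) *
        W2 q d ts (ltil lam) Q fW phi v m p i u) s with hG'
  have hmeasG' : Measurable G' := by
    apply Finset.measurable_sum
    intro m _
    exact ((cl_ltil_meas hClam hlam_meas hlam_bd i).mul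
      (meas_W2 hClam hlam_meas hlam_bd hQ_meas hfW_meas hv_meas m p i)).indicator
      measurableSet_Ioo
  have hbadnull : volume (ts '' (Set.Iic q)) = 0 :=
    Set.Countable.measure_zero ((Set.finite_Iic q).image ts).countable _
  have h0 : ∀ᵐ s ∂(volume : Measure ℝ), s ∉ ts '' (Set.Iic q) := by
    rw [ae_iff]
    simpa only [not_not, Set.setOf_mem_eq] using hbadnull
  have h1 : ∀ᵐ s ∂(volume.restrict (Set.Ioc 0 (ts q))), s ∉ ts '' (Set.Iic q) :=
    ae_restrict_of_ae h0
  have h2 : ∀ᵐ s ∂(volume.restrict (Set.Ioc 0 (ts q))), s ∈ Set.Ioc 0 (ts q) :=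
    ae_restrict_mem measurableSet_Ioc
  apply hmeasG'.aestronglyMeasurable.restrict.congr
  filter_upwards [h1, h2] with s hs1 hs2
  obtain ⟨m, hmq, hm1, hm2⟩ := exists_Ioo hts0 htsmono hs2.1 hs2.2 hs1
  have hs : (0:ℝ) ≤ s := hs2.1.le
  simp only [hG']
  have hsum : ∑ m' ∈ Finset.range q,
      (Set.Ioo (ts m') (ts (m'+1))).indicator
        (fun u => ltil lam i u * Real.exp (-(Lam (ltil lam) i u)) *
          W2 q d ts (ltil lam) Q fW phi v m' p i u) s
      = ltil lam i s * Real.exp (-(Lam (ltil lam) i s)) *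
          W2 q d ts (ltil lam) Q fW phi v m p i s := by
    rw [Finset.sum_eq_single_of_mem m (Finset.mem_range.2 hmq)]
    · exact Set.indicator_of_mem (Set.mem_Ioo.mpr ⟨hm1, hm2⟩) _
    · intro m' hm' hne
      apply Set.indicator_of_notMem
      rintro ⟨hc1, hc2⟩
      rcases Nat.lt_or_ge m' m with h | h
      · have : ts (m'+1) ≤ ts m := ts_mono' htsmono (by omega) hmq.le
        linarith
      · have hmm : m < m' := by omega
        have : ts (m+1) ≤ ts m' := ts_mono' htsmono (by omega)
          (Finset.mem_range.1 hm').le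
        linarith
  rw [hsum, ← cl_eq_ltil hClam hlam_meas hlam_bd i hs,
    ← Wf_eq_W2 hts0 htsmono hClam hlam_bd hmq hm1 hm2 p i]

include hts0 htsmono hClam hlam_meas hlam_bd hQ_meas hQ_bd hQ_sum hfW_meas hfW_nonneg hfW_int hv_meas hCv hv_bd in
lemma integrableOn_clWf {p : ℕ → ℝ} (hp : mem1 q p) (i : ℕ) {a b : ℝ}
    (ha : 0 ≤ a) (hb : b ≤ ts q) :
    IntegrableOn
      (fun s => lam i s * Real.exp (-(Lam lam i s)) * Wf q d ts lam Q fW phi v p i s)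
      (Set.Ioc a b) volume := by
  have hsub : Set.Ioc a b ⊆ Set.Ioc 0 (ts q) := Set.Ioc_subset_Ioc ha hb
  apply Integrable.mono' (g := fun _ => Clam * Cv)
  · exact (integrableOn_const_iff).mpr (Or.inr measure_Ioc_lt_top)
  · exact (aesm_clWf hts0 htsmono hClam hlam_meas hlam_bd hQ_meas hQ_bd hfW_meas
      hfW_nonneg hv_meas p i).mono_measure (Measure.restrict_mono hsub le_rfl)
  · refine (ae_restrict_iff' measurableSet_Ioc).2 (ae_of_all _ fun s hs => ?_)
    have hs0 : (0:ℝ) ≤ s := le_trans ha hs.1.le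
    rw [Real.norm_eq_abs, abs_mul]
    apply mul_le_mul
    · rw [abs_of_nonneg (cl_nonneg hClam hlam_meas hlam_bd i hs0)]
      exact cl_le hClam hlam_meas hlam_bd i hs0
    · exact Wf_bound hts0 htsmono hClam hlam_bd hQ_bd hfW_meas hfW_nonneg hfW_int
        hCv hv_bd hp i hs0 hQ_sum
    · exact abs_nonneg _
    · exact hClam

end IntFacts

section CoreEst

lemma l1_ratio {I : Finset ℕ} {a b : ℕ → ℝ} (ha : ∀ j ∈ I, 0 ≤ a j)
    (hA : 0 < ∑ k ∈ I, a k) (hB : 0 < ∑ k ∈ I, b k)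
    (hAB : (∑ k ∈ I, a k) ≤ ∑ k ∈ I, b k) :
    ∑ j ∈ I, |a j / (∑ k ∈ I, a k) - b j / (∑ k ∈ I, b k)|
      ≤ 2 * (∑ j ∈ I, |a j - b j|) / (∑ k ∈ I, b k) := by
  set A := ∑ k ∈ I, a k with hA'
  set B := ∑ k ∈ I, b k with hB'
  set S := ∑ j ∈ I, |a j - b j| with hS'
  have hS0 : 0 ≤ S := Finset.sum_nonneg fun j _ => abs_nonneg _
  have hBA : B - A ≤ S := by
    have h1 : B - A = ∑ j ∈ I, (b j - a j) := by
      rw [hA', hB', ← Finset.sum_sub_distrib]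
    rw [h1, hS']
    apply Finset.sum_le_sum
    intro j _
    rw [abs_sub_comm]
    exact le_abs_self _
  have hterm : ∀ j ∈ I, |a j / A - b j / B|
      ≤ (a j * (B - A) + |a j - b j| * A) / (A * B) := by
    intro j hj
    have hrw : a j / A - b j / B = (a j * (B - A) + (a j - b j) * A) / (A * B) := by
      field_simp
      ring
    rw [hrw, abs_div, abs_of_pos (mul_pos hA hB)]
    gcongr
    calc |a j * (B - A) + (a j - b j) * A|
        ≤ |a j * (B - A)| + |(a j - b j) * A| := abs_add_le _ _
      _ = a j * (B - A) + |a j - b j| * A := by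
          rw [abs_mul, abs_mul, abs_of_nonneg (ha j hj),
            abs_of_nonneg (by linarith : (0:ℝ) ≤ B - A), abs_of_pos hA]
  calc ∑ j ∈ I, |a j / A - b j / B|
      ≤ ∑ j ∈ I, (a j * (B - A) + |a j - b j| * A) / (A * B) :=
        Finset.sum_le_sum hterm
    _ = (A * (B - A) + S * A) / (A * B) := by
        rw [← Finset.sum_div, Finset.sum_add_distrib, ← Finset.sum_mul, ← Finset.sum_mul,
          ← hA', ← hS']
    _ = (B - A + S) / B := by
        have hA0 : A ≠ 0 := ne_of_gt hA
        have hB0 : B ≠ 0 := ne_of_gt hB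
        field_simp
    _ ≤ 2 * S / B := by gcongr ?_ / B; linarith

variable (hts0 : ts 0 = 0) (htsmono : ∀ i, i < q → ts i ≤ ts (i + 1))
  (hClam : 0 ≤ Clam)
  (hlam_bd : ∀ i s, 0 ≤ s → lam i s ∈ Set.Icc 0 Clam)
  (hQ_bd : ∀ i j s, 0 ≤ s → Q i j s ∈ Set.Icc (0:ℝ) 1)
  (hfW_nonneg : ∀ y, 0 ≤ fW y)

lemma key_abstract {a b : ℕ → ℝ} (ha : ∀ j ∈ Finset.Icc 1 q, 0 ≤ a j)
    (hb : ∀ j ∈ Finset.Icc 1 q, 0 ≤ b j)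
    {p p' : ℕ → ℝ} (hp : mem1 q p) (hp' : mem1 q p')
    (hCv : 0 ≤ Cv) (hlv : 0 ≤ lv)
    (hv_bd : ∀ r, mem1 q r → |v r| ≤ Cv)
    (hv_lip : ∀ r r', mem1 q r → mem1 q r' → |v r - v r'| ≤ lv * l1 q r r') :
    |v (if 0 < ∑ k ∈ Finset.Icc 1 q, a k then (fun j => a j / ∑ k ∈ Finset.Icc 1 q, a k) else p)
        * (∑ k ∈ Finset.Icc 1 q, a k)
      - v (if 0 < ∑ k ∈ Finset.Icc 1 q, b k then (fun j => b j / ∑ k ∈ Finset.Icc 1 q, b k) else p')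
        * (∑ k ∈ Finset.Icc 1 q, b k)|
      ≤ (Cv + 2 * lv) * ∑ j ∈ Finset.Icc 1 q, |a j - b j| := by
  classical
  set A := ∑ k ∈ Finset.Icc 1 q, a k with hA'
  set B := ∑ k ∈ Finset.Icc 1 q, b k with hB'
  set S := ∑ j ∈ Finset.Icc 1 q, |a j - b j| with hS'
  have hS0 : 0 ≤ S := Finset.sum_nonneg fun j _ => abs_nonneg _
  have hANN : 0 ≤ A := Finset.sum_nonneg ha
  have hBNN : 0 ≤ B := Finset.sum_nonneg hb
  have hABS : |A - B| ≤ S := by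
    rw [hA', hB', ← Finset.sum_sub_distrib, hS']
    exact Finset.abs_sum_le_sum_abs _ _
  have hexp : (Cv + 2 * lv) * S = Cv * S + 2 * lv * S := by ring
  have h2lvS : 0 ≤ 2 * lv * S := by positivity
  have hCvS : 0 ≤ Cv * S := by positivity
  by_cases hA : 0 < A <;> by_cases hB : 0 < B
  · rw [if_pos hA, if_pos hB]
    have hm1 : mem1 q (fun j => a j / A) := mem1_normalized ha hA
    have hm2 : mem1 q (fun j => b j / B) := mem1_normalized hb hB
    have hv2 := hv_bd _ hm2
    have hv1 := hv_bd _ hm1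
    have hlip := hv_lip _ _ hm1 hm2
    have hl1 : l1 q (fun j => a j / A) (fun j => b j / B)
        = ∑ j ∈ Finset.Icc 1 q, |a j / A - b j / B| := rfl
    rcases le_total A B with hle | hle
    · have hlr := l1_ratio ha hA hB hle
      have h1 : |v (fun j => a j / A) - v (fun j => b j / B)| ≤ lv * (2 * S / B) := by
        refine le_trans hlip ?_
        rw [hl1]
        exact mul_le_mul_of_nonneg_left hlr hlv
      have h2 : |v (fun j => a j / A) * A - v (fun j => b j / B) * B|
          ≤ |v (fun j => a j / A) - v (fun j => b j / B)| * A
            + |v (fun j => b j / B)| * |A - B| := by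
        have hid : v (fun j => a j / A) * A - v (fun j => b j / B) * B
            = (v (fun j => a j / A) - v (fun j => b j / B)) * A
              + v (fun j => b j / B) * (A - B) := by ring
        rw [hid]
        calc _ ≤ |(v (fun j => a j / A) - v (fun j => b j / B)) * A|
              + |v (fun j => b j / B) * (A - B)| := abs_add_le _ _
          _ = _ := by rw [abs_mul, abs_mul, abs_of_nonneg hANN]
      have h3 : |v (fun j => a j / A) - v (fun j => b j / B)| * A ≤ 2 * lv * S := by
        calc |v (fun j => a j / A) - v (fun j => b j / B)| * A
            ≤ (lv * (2 * S / B)) * A := mul_le_mul_of_nonneg_right h1 hANN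
          _ ≤ (lv * (2 * S / B)) * B := by
              apply mul_le_mul_of_nonneg_left hle
              positivity
          _ = 2 * lv * S := by field_simp
      have h4 : |v (fun j => b j / B)| * |A - B| ≤ Cv * S :=
        mul_le_mul hv2 hABS (abs_nonneg _) hCv
      linarith
    · have hSsymm : ∑ j ∈ Finset.Icc 1 q, |b j - a j| = S := by
        rw [hS']
        exact Finset.sum_congr rfl fun j _ => abs_sub_comm _ _
      have hlr := l1_ratio hb hB hA hle
      rw [hSsymm] at hlr
      have h1 : |v (fun j => a j / A) - v (fun j => b j / B)| ≤ lv * (2 * S / A) := by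
        refine le_trans hlip ?_
        rw [hl1]
        refine mul_le_mul_of_nonneg_left (le_trans ?_ hlr) hlv
        apply le_of_eq
        exact Finset.sum_congr rfl fun j _ => abs_sub_comm _ _
      have h2 : |v (fun j => a j / A) * A - v (fun j => b j / B) * B|
          ≤ |v (fun j => a j / A)| * |A - B|
            + |v (fun j => a j / A) - v (fun j => b j / B)| * B := by
        have hid : v (fun j => a j / A) * A - v (fun j => b j / B) * B
            = v (fun j => a j / A) * (A - B)
              + (v (fun j => a j / A) - v (fun j => b j / B)) * B := by ring
        rw [hid]
        calc _ ≤ |v (fun j => a j / A) * (A - B)|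
              + |(v (fun j => a j / A) - v (fun j => b j / B)) * B| := abs_add_le _ _
          _ = _ := by rw [abs_mul, abs_mul, abs_of_nonneg hBNN]
      have h3 : |v (fun j => a j / A) - v (fun j => b j / B)| * B ≤ 2 * lv * S := by
        calc |v (fun j => a j / A) - v (fun j => b j / B)| * B
            ≤ (lv * (2 * S / A)) * B := mul_le_mul_of_nonneg_right h1 hBNN
          _ ≤ (lv * (2 * S / A)) * A := by
              apply mul_le_mul_of_nonneg_left hle
              positivity
          _ = 2 * lv * S := by field_simp
      have h4 : |v (fun j => a j / A)| * |A - B| ≤ Cv * S :=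
        mul_le_mul hv1 hABS (abs_nonneg _) hCv
      linarith
  · -- A > 0, B = 0
    have hB0 : B = 0 := le_antisymm (not_lt.1 hB) hBNN
    have hbz : ∀ j ∈ Finset.Icc 1 q, b j = 0 :=
      (Finset.sum_eq_zero_iff_of_nonneg hb).1 hB0
    have hSA : S = A := by
      rw [hS', hA']
      exact Finset.sum_congr rfl fun j hj => by
        rw [hbz j hj, sub_zero, abs_of_nonneg (ha j hj)]
    rw [if_pos hA, if_neg hB, hB0, mul_zero, sub_zero, abs_mul, abs_of_nonneg hANN, hSA]
    have hv1 := mul_le_mul_of_nonneg_right (hv_bd _ (mem1_normalized ha hA)) hANN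
    have hex2 : (Cv + 2 * lv) * A = Cv * A + 2 * lv * A := by ring
    have h2A : 0 ≤ 2 * lv * A := by positivity
    linarith
  · -- A = 0, B > 0
    have hA0 : A = 0 := le_antisymm (not_lt.1 hA) hANN
    have haz : ∀ j ∈ Finset.Icc 1 q, a j = 0 :=
      (Finset.sum_eq_zero_iff_of_nonneg ha).1 hA0
    have hSB : S = B := by
      rw [hS', hB']
      exact Finset.sum_congr rfl fun j hj => by
        rw [haz j hj, zero_sub, abs_neg, abs_of_nonneg (hb j hj)]
    rw [if_neg hA, if_pos hB, hA0, mul_zero, zero_sub, abs_neg, abs_mul,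
      abs_of_nonneg hBNN, hSB]
    have hv2 := mul_le_mul_of_nonneg_right (hv_bd _ (mem1_normalized hb hB)) hBNN
    have hex2 : (Cv + 2 * lv) * B = Cv * B + 2 * lv * B := by ring
    have h2B : 0 ≤ 2 * lv * B := by positivity
    linarith
  · -- both zero
    have hA0 : A = 0 := le_antisymm (not_lt.1 hA) hANN
    have hB0 : B = 0 := le_antisymm (not_lt.1 hB) hBNN
    rw [if_neg hA, if_neg hB, hA0, hB0, mul_zero, mul_zero, sub_zero, abs_zero]
    positivity

include hts0 htsmono hClam hlam_bd hQ_bd hfW_nonneg in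
lemma key_pointwise (hCv : 0 ≤ Cv) (hlv : 0 ≤ lv)
    (hv_bd : ∀ r, mem1 q r → |v r| ≤ Cv)
    (hv_lip : ∀ r r', mem1 q r → mem1 q r' → |v r - v r'| ≤ lv * l1 q r r')
    {p p' : ℕ → ℝ} (hp : mem1 q p) (hp' : mem1 q p')
    {m : ℕ} (hm : m < q) {s : ℝ} (h1 : ts m < s) (h2 : s < ts (m+1)) (y : Fin d → ℝ) :
    |v (Psi q d ts lam Q fW phi p y s) * psiBar q d ts lam Q fW phi m p y s
      - v (Psi q d ts lam Q fW phi p' y s) * psiBar q d ts lam Q fW phi m p' y s|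
      ≤ (Cv + 2 * lv) * ∑ j ∈ Finset.Icc 1 q,
          |psiNum q d ts lam Q fW phi m p y s j - psiNum q d ts lam Q fW phi m p' y s j| := by
  have hs : 0 ≤ s := le_trans (ts_nonneg hts0 htsmono hm.le) h1.le
  rw [Psi_on_Ioo hts0 htsmono hm h1 h2 p y, Psi_on_Ioo hts0 htsmono hm h1 h2 p' y]
  unfold Psi2
  simp only [psiBar_eq]
  exact key_abstract (fun j _ => psiNum_nonneg hlam_bd hQ_bd hfW_nonneg hp hs m y j)
    (fun j _ => psiNum_nonneg hlam_bd hQ_bd hfW_nonneg hp' hs m y j) hp hp' hCv hlv hv_bd hv_lip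

end CoreEst

section SBound

variable (hts0 : ts 0 = 0) (htsmono : ∀ i, i < q → ts i ≤ ts (i + 1))
  (hClam : 0 ≤ Clam) (hlam_meas : ∀ i, Measurable (lam i))
  (hlam_bd : ∀ i s, 0 ≤ s → lam i s ∈ Set.Icc 0 Clam)
  (hQ_meas : ∀ i j, Measurable (Q i j))
  (hQ_bd : ∀ i j s, 0 ≤ s → Q i j s ∈ Set.Icc (0:ℝ) 1)
  (hQ_sum : ∀ i s, 0 ≤ s → ∑ j ∈ Finset.Icc 1 q, Q i j s = 1)
  (hfW_meas : Measurable fW) (hfW_nonneg : ∀ y, 0 ≤ fW y)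
  (hfW_int : ∫ y : Fin d → ℝ, fW y = 1)
  (hv_meas : Measurable v) (hCv : 0 ≤ Cv) (hlv : 0 ≤ lv)
  (hv_bd : ∀ r, mem1 q r → |v r| ≤ Cv)
  (hv_lip : ∀ r r', mem1 q r → mem1 q r' → |v r - v r'| ≤ lv * l1 q r r')

lemma psiBar_as_gk (m : ℕ) (p : ℕ → ℝ) (y : Fin d → ℝ) (s : ℝ) :
    psiBar q d ts lam Q fW phi m p y s
      = ∑ i ∈ Finset.Icc (m+1) q,
          p i * (lam i s * Real.exp (-(Lam lam i s))) * gk q d Q fW phi i s y := by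
  unfold psiBar psiNum gk
  rw [Finset.sum_comm]
  refine Finset.sum_congr rfl fun i _ => ?_
  rw [Finset.mul_sum]
  exact Finset.sum_congr rfl fun k _ => by ring

include hQ_meas hfW_meas in
lemma gk_meas_y (i : ℕ) (s : ℝ) : Measurable (fun y => gk q d Q fW phi i s y) := by
  apply Finset.measurable_sum
  intro j _
  exact (hfW_meas.comp (measurable_id.sub measurable_const)).const_mul _

include hts0 htsmono hClam hlam_meas hlam_bd hQ_meas hfW_meas hv_meas in
lemma meas_vPsi_y {m : ℕ} (hm : m < q) {s : ℝ} (h1 : ts m < s) (h2 : s < ts (m+1))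
    (p : ℕ → ℝ) :
    Measurable (fun y => v (Psi q d ts lam Q fW phi p y s)) := by
  have hs : 0 ≤ s := le_trans (ts_nonneg hts0 htsmono hm.le) h1.le
  have heq : (fun y => Psi q d ts lam Q fW phi p y s)
      = fun y => Psi2 q d ts (ltil lam) Q fW phi m p y s := by
    funext y
    rw [Psi_on_Ioo hts0 htsmono hm h1 h2 p y, Psi2_ltil_eq hClam hlam_bd hs m p y]
  have : (fun y => v (Psi q d ts lam Q fW phi p y s))
      = v ∘ ((fun z : ℝ × (Fin d → ℝ) => Psi2 q d ts (ltil lam) Q fW phi m p z.2 z.1)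
          ∘ (fun y => (s, y))) := by
    rw [show ((fun z : ℝ × (Fin d → ℝ) => Psi2 q d ts (ltil lam) Q fW phi m p z.2 z.1)
          ∘ (fun y : Fin d → ℝ => (s, y))) = fun y => Psi2 q d ts (ltil lam) Q fW phi m p y s
        from rfl, ← heq]
    rfl
  rw [this]
  exact hv_meas.comp ((meas_Psi2_joint hClam hlam_meas hlam_bd hQ_meas hfW_meas m p).comp
    (measurable_const.prodMk measurable_id))

include hts0 htsmono hClam hlam_meas hlam_bd hQ_meas hQ_bd hfW_meas hfW_nonneg hfW_int hv_meas hCv hv_bd in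
lemma integrable_vPsi_gk {m : ℕ} (hm : m < q) {s : ℝ} (h1 : ts m < s) (h2 : s < ts (m+1))
    {p : ℕ → ℝ} (hp : mem1 q p) {c : ℝ} (hc : 0 ≤ c) (i : ℕ) :
    Integrable (fun y => v (Psi q d ts lam Q fW phi p y s) * (c * gk q d Q fW phi i s y))
      (volume : Measure (Fin d → ℝ)) := by
  have hs : 0 ≤ s := le_trans (ts_nonneg hts0 htsmono hm.le) h1.le
  apply Integrable.mono' (g := fun y => Cv * (c * gk q d Q fW phi i s y))
  · exact (((gk_integrable hfW_meas hfW_int i s).const_mul c).const_mul Cv)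
  · exact ((meas_vPsi_y hts0 htsmono hClam hlam_meas hlam_bd hQ_meas hfW_meas hv_meas
      hm h1 h2 p).mul ((gk_meas_y hQ_meas hfW_meas i s).const_mul c)).aestronglyMeasurable
  · refine ae_of_all _ fun y => ?_
    have hg := gk_nonneg (q := q) (phi := phi) hQ_bd hfW_nonneg i hs y
    rw [Real.norm_eq_abs, abs_mul, abs_of_nonneg (by positivity : 0 ≤ c * gk q d Q fW phi i s y)]
    exact mul_le_mul_of_nonneg_right
      (hv_bd _ (mem1_Psi hts0 htsmono hlam_bd hQ_bd hfW_nonneg hp y s)) (by positivity)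

include hts0 htsmono hClam hlam_meas hlam_bd hQ_meas hQ_bd hfW_meas hfW_nonneg hfW_int hv_meas hCv hv_bd in
lemma integrable_vPsiBar {m : ℕ} (hm : m < q) {s : ℝ} (h1 : ts m < s) (h2 : s < ts (m+1))
    {p : ℕ → ℝ} (hp : mem1 q p) :
    Integrable (fun y => v (Psi q d ts lam Q fW phi p y s) * psiBar q d ts lam Q fW phi m p y s)
      (volume : Measure (Fin d → ℝ)) := by
  have hs : 0 ≤ s := le_trans (ts_nonneg hts0 htsmono hm.le) h1.le
  have heq : (fun y => v (Psi q d ts lam Q fW phi p y s) * psiBar q d ts lam Q fW phi m p y s)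
      = fun y => ∑ i ∈ Finset.Icc (m+1) q,
          v (Psi q d ts lam Q fW phi p y s)
            * (p i * (lam i s * Real.exp (-(Lam lam i s))) * gk q d Q fW phi i s y) := by
    funext y
    rw [psiBar_as_gk, Finset.mul_sum]
  rw [heq]
  apply integrable_finset_sum
  intro i hi
  have hpi : 0 ≤ p i := mem1_coord hp (by rw [Finset.mem_Icc] at hi; omega)
    (by rw [Finset.mem_Icc] at hi; omega)
  have hcl := cl_nonneg hClam hlam_meas hlam_bd i hs
  have : ∀ y, v (Psi q d ts lam Q fW phi p y s)
        * (p i * (lam i s * Real.exp (-(Lam lam i s))) * gk q d Q fW phi i s y)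
      = v (Psi q d ts lam Q fW phi p y s)
        * ((p i * (lam i s * Real.exp (-(Lam lam i s)))) * gk q d Q fW phi i s y) :=
    fun y => rfl
  exact integrable_vPsi_gk hts0 htsmono hClam hlam_meas hlam_bd hQ_meas hQ_bd hfW_meas
    hfW_nonneg hfW_int hv_meas hCv hv_bd hm h1 h2 hp (mul_nonneg hpi hcl) i

include hts0 htsmono hClam hlam_meas hlam_bd hQ_meas hQ_bd hfW_meas hfW_nonneg hfW_int hv_meas hCv hv_bd in
lemma sum_to_integral {m : ℕ} (hm : m < q) {s : ℝ} (h1 : ts m < s) (h2 : s < ts (m+1))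
    {p : ℕ → ℝ} (hp : mem1 q p) :
    ∑ i ∈ Finset.Icc (m+1) q,
        p i * (lam i s * Real.exp (-(Lam lam i s)) * Wf q d ts lam Q fW phi v p i s)
      = ∫ y : Fin d → ℝ,
          v (Psi q d ts lam Q fW phi p y s) * psiBar q d ts lam Q fW phi m p y s := by
  have hs : 0 ≤ s := le_trans (ts_nonneg hts0 htsmono hm.le) h1.le
  have hstep : ∀ i ∈ Finset.Icc (m+1) q,
      p i * (lam i s * Real.exp (-(Lam lam i s)) * Wf q d ts lam Q fW phi v p i s)
        = ∫ y : Fin d → ℝ, v (Psi q d ts lam Q fW phi p y s)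
            * (p i * (lam i s * Real.exp (-(Lam lam i s))) * gk q d Q fW phi i s y) := by
    intro i hi
    unfold Wf
    rw [show p i * (lam i s * Real.exp (-(Lam lam i s))
          * ∫ y : Fin d → ℝ, v (Psi q d ts lam Q fW phi p y s) * gk q d Q fW phi i s y)
        = (p i * (lam i s * Real.exp (-(Lam lam i s))))
          * ∫ y : Fin d → ℝ, v (Psi q d ts lam Q fW phi p y s) * gk q d Q fW phi i s y
        from by ring, ← integral_const_mul]
    refine integral_congr_ae (ae_of_all _ fun y => ?_)
    ring
  rw [Finset.sum_congr rfl hstep,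
    ← integral_finset_sum _ (fun i hi => by
      have hpi : 0 ≤ p i := mem1_coord hp (by rw [Finset.mem_Icc] at hi; omega)
        (by rw [Finset.mem_Icc] at hi; omega)
      exact integrable_vPsi_gk hts0 htsmono hClam hlam_meas hlam_bd hQ_meas hQ_bd hfW_meas
        hfW_nonneg hfW_int hv_meas hCv hv_bd hm h1 h2 hp
        (mul_nonneg hpi (cl_nonneg hClam hlam_meas hlam_bd i hs)) i)]
  refine integral_congr_ae (ae_of_all _ fun y => ?_)
  simp only [← Finset.mul_sum]
  rw [psiBar_as_gk]

end SBound

section SBound2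

variable (hts0 : ts 0 = 0) (htsmono : ∀ i, i < q → ts i ≤ ts (i + 1))
  (hClam : 0 ≤ Clam) (hlam_meas : ∀ i, Measurable (lam i))
  (hlam_bd : ∀ i s, 0 ≤ s → lam i s ∈ Set.Icc 0 Clam)
  (hQ_meas : ∀ i j, Measurable (Q i j))
  (hQ_bd : ∀ i j s, 0 ≤ s → Q i j s ∈ Set.Icc (0:ℝ) 1)
  (hQ_sum : ∀ i s, 0 ≤ s → ∑ j ∈ Finset.Icc 1 q, Q i j s = 1)
  (hfW_meas : Measurable fW) (hfW_nonneg : ∀ y, 0 ≤ fW y)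
  (hfW_int : ∫ y : Fin d → ℝ, fW y = 1)
  (hv_meas : Measurable v) (hCv : 0 ≤ Cv) (hlv : 0 ≤ lv)
  (hv_bd : ∀ r, mem1 q r → |v r| ≤ Cv)
  (hv_lip : ∀ r r', mem1 q r → mem1 q r' → |v r - v r'| ≤ lv * l1 q r r')

include hts0 htsmono hClam hlam_meas hlam_bd hQ_meas hQ_bd hQ_sum hfW_meas hfW_nonneg
  hfW_int hv_meas hCv hlv hv_bd hv_lip in
lemma pointwise_s_bound {p p' : ℕ → ℝ} (hp : mem1 q p) (hp' : mem1 q p')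
    {m : ℕ} (hm : m < q) {s : ℝ} (h1 : ts m < s) (h2 : s < ts (m+1)) :
    |∑ i ∈ Finset.Icc (m+1) q,
        (p i * (lam i s * Real.exp (-(Lam lam i s)) * Wf q d ts lam Q fW phi v p i s)
          - p' i * (lam i s * Real.exp (-(Lam lam i s)) * Wf q d ts lam Q fW phi v p' i s))|
      ≤ (Cv + 2 * lv) * ∑ l ∈ Finset.Icc (m+1) q,
          |p l - p' l| * (lam l s * Real.exp (-(Lam lam l s))) := by
  have hs : 0 ≤ s := le_trans (ts_nonneg hts0 htsmono hm.le) h1.le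
  set K : ℕ → ℝ := fun j => ∑ l ∈ Finset.Icc (m+1) q,
      |p l - p' l| * (lam l s * Real.exp (-(Lam lam l s)) * Q l j s) with hK
  have hpt : ∀ y : Fin d → ℝ,
      |v (Psi q d ts lam Q fW phi p y s) * psiBar q d ts lam Q fW phi m p y s
        - v (Psi q d ts lam Q fW phi p' y s) * psiBar q d ts lam Q fW phi m p' y s|
      ≤ (Cv + 2*lv) * ∑ j ∈ Finset.Icc 1 q, K j * fW (y - phi j) := by
    intro y
    refine le_trans (key_pointwise hts0 htsmono hClam hlam_bd hQ_bd hfW_nonneg hCv hlv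
      hv_bd hv_lip hp hp' hm h1 h2 y) ?_
    apply mul_le_mul_of_nonneg_left ?_ (by positivity : (0:ℝ) ≤ Cv + 2*lv)
    apply Finset.sum_le_sum
    intro j hj
    have hdiff : psiNum q d ts lam Q fW phi m p y s j - psiNum q d ts lam Q fW phi m p' y s j
        = (∑ l ∈ Finset.Icc (m+1) q,
            (p l - p' l) * (lam l s * Real.exp (-(Lam lam l s)) * Q l j s)) * fW (y - phi j) := by
      unfold psiNum
      rw [← Finset.sum_sub_distrib, Finset.sum_mul]
      exact Finset.sum_congr rfl fun l _ => by ring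
    rw [hdiff, abs_mul, abs_of_nonneg (hfW_nonneg _)]
    apply mul_le_mul_of_nonneg_right ?_ (hfW_nonneg _)
    refine le_trans (Finset.abs_sum_le_sum_abs _ _) (le_of_eq ?_)
    refine Finset.sum_congr rfl fun l _ => ?_
    rw [abs_mul, abs_of_nonneg (mul_nonneg (cl_nonneg hClam hlam_meas hlam_bd l hs)
      (hQ_bd l j s hs).1)]
  have hDint : Integrable (fun y : Fin d → ℝ =>
      (Cv + 2*lv) * ∑ j ∈ Finset.Icc 1 q, K j * fW (y - phi j)) volume :=
    (integrable_finset_sum _ fun j _ =>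
      ((fW_integrable hfW_meas hfW_int).comp_sub_right (phi j)).const_mul (K j)).const_mul _
  have hIp := integrable_vPsiBar (phi := phi) hts0 htsmono hClam hlam_meas hlam_bd hQ_meas hQ_bd hfW_meas
    hfW_nonneg hfW_int hv_meas hCv hv_bd hm h1 h2 hp
  have hIp' := integrable_vPsiBar (phi := phi) hts0 htsmono hClam hlam_meas hlam_bd hQ_meas hQ_bd hfW_meas
    hfW_nonneg hfW_int hv_meas hCv hv_bd hm h1 h2 hp'
  have hKsum : ∑ j ∈ Finset.Icc 1 q, K j
      = ∑ l ∈ Finset.Icc (m+1) q, |p l - p' l| * (lam l s * Real.exp (-(Lam lam l s))) := by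
    simp only [hK]
    rw [Finset.sum_comm]
    refine Finset.sum_congr rfl fun l _ => ?_
    rw [← Finset.mul_sum, ← Finset.mul_sum, hQ_sum l s hs, mul_one]
  rw [Finset.sum_sub_distrib,
    sum_to_integral hts0 htsmono hClam hlam_meas hlam_bd hQ_meas hQ_bd hfW_meas hfW_nonneg
      hfW_int hv_meas hCv hv_bd hm h1 h2 hp,
    sum_to_integral hts0 htsmono hClam hlam_meas hlam_bd hQ_meas hQ_bd hfW_meas hfW_nonneg
      hfW_int hv_meas hCv hv_bd hm h1 h2 hp',
    ← integral_sub hIp hIp', ← hKsum]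
  calc |∫ y : Fin d → ℝ,
        (v (Psi q d ts lam Q fW phi p y s) * psiBar q d ts lam Q fW phi m p y s
          - v (Psi q d ts lam Q fW phi p' y s) * psiBar q d ts lam Q fW phi m p' y s)|
      = ‖∫ y : Fin d → ℝ,
        (v (Psi q d ts lam Q fW phi p y s) * psiBar q d ts lam Q fW phi m p y s
          - v (Psi q d ts lam Q fW phi p' y s) * psiBar q d ts lam Q fW phi m p' y s)‖ :=
        (Real.norm_eq_abs _).symm
    _ ≤ ∫ y : Fin d → ℝ,
        ‖v (Psi q d ts lam Q fW phi p y s) * psiBar q d ts lam Q fW phi m p y s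
          - v (Psi q d ts lam Q fW phi p' y s) * psiBar q d ts lam Q fW phi m p' y s‖ :=
        norm_integral_le_integral_norm _
    _ ≤ ∫ y : Fin d → ℝ, (Cv + 2*lv) * ∑ j ∈ Finset.Icc 1 q, K j * fW (y - phi j) := by
        apply integral_mono_of_nonneg (ae_of_all _ fun y => norm_nonneg _) hDint
          (ae_of_all _ fun y => ?_)
        simp only [Real.norm_eq_abs]
        exact hpt y
    _ = (Cv + 2*lv) * ∑ j ∈ Finset.Icc 1 q, K j := by
        rw [integral_const_mul]
        congr 1
        rw [integral_finset_sum _ (fun j _ =>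
          ((fW_integrable hfW_meas hfW_int).comp_sub_right (phi j)).const_mul (K j))]
        refine Finset.sum_congr rfl fun j _ => ?_
        rw [integral_const_mul, integral_sub_right_eq_self fW (phi j), hfW_int, mul_one]

end SBound2

section Assemble

lemma min_lip (u u' c : ℝ) : |min u c - min u' c| ≤ |u - u'| := by
  rcases le_total u u' with h | h
  · have h1 : min u c ≤ min u' c := min_le_min h le_rfl
    rw [abs_of_nonpos (by linarith), abs_of_nonpos (by linarith)]
    rcases le_total u c with h2 | h2
    · rw [min_eq_left h2]
      have h3 := min_le_left u' c
      linarith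
    · rw [min_eq_right h2]
      have h3 := min_le_right u' c
      linarith
  · have h1 : min u' c ≤ min u c := min_le_min h le_rfl
    rw [abs_of_nonneg (by linarith), abs_of_nonneg (by linarith)]
    rcases le_total u' c with h2 | h2
    · rw [min_eq_left h2]
      have h3 := min_le_left u c
      linarith
    · rw [min_eq_right h2]
      have h3 := min_le_right u c
      linarith

variable (hts0 : ts 0 = 0) (htsmono : ∀ i, i < q → ts i ≤ ts (i + 1))
  (hClam : 0 ≤ Clam) (hlam_meas : ∀ i, Measurable (lam i))
  (hlam_bd : ∀ i s, 0 ≤ s → lam i s ∈ Set.Icc 0 Clam)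
  (hQ_meas : ∀ i j, Measurable (Q i j))
  (hQ_bd : ∀ i j s, 0 ≤ s → Q i j s ∈ Set.Icc (0:ℝ) 1)
  (hQ_sum : ∀ i s, 0 ≤ s → ∑ j ∈ Finset.Icc 1 q, Q i j s = 1)
  (hfW_meas : Measurable fW) (hfW_nonneg : ∀ y, 0 ≤ fW y)
  (hfW_int : ∫ y : Fin d → ℝ, fW y = 1)
  (hv_meas : Measurable v) (hCv : 0 ≤ Cv) (hlv : 0 ≤ lv)
  (hv_bd : ∀ r, mem1 q r → |v r| ≤ Cv)
  (hv_lip : ∀ r r', mem1 q r → mem1 q r' → |v r - v r'| ≤ lv * l1 q r r')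

include hts0 htsmono in
lemma Iop_as_setIntegral (p : ℕ → ℝ) {u : ℝ} (hu : 0 ≤ u) :
    Iop q d ts lam Q fW phi v p u = ∑ i ∈ Finset.Icc 1 q, p i *
      ∫ s in Set.Ioc 0 (min u (ts i)),
        lam i s * Real.exp (-(Lam lam i s)) * Wf q d ts lam Q fW phi v p i s := by
  unfold Iop
  refine Finset.sum_congr rfl fun i hi => ?_
  congr 1
  rw [intervalIntegral.integral_of_le
    (le_min hu (ts_nonneg hts0 htsmono (Finset.mem_Icc.1 hi).2))]
  rfl

include hts0 htsmono hClam hlam_meas hlam_bd hQ_meas hQ_bd hQ_sum hfW_meas hfW_nonneg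
  hfW_int hv_meas hCv hv_bd in
lemma stepA {p : ℕ → ℝ} (hp : mem1 q p) {u u' : ℝ} (hu : 0 ≤ u) (hu' : 0 ≤ u') :
    |Iop q d ts lam Q fW phi v p u - Iop q d ts lam Q fW phi v p u'|
      ≤ Cv * Clam * |u - u'| := by
  rw [Iop_as_setIntegral hts0 htsmono p hu, Iop_as_setIntegral hts0 htsmono p hu',
    ← Finset.sum_sub_distrib]
  refine le_trans (Finset.abs_sum_le_sum_abs _ _) ?_
  have hbd : ∀ i ∈ Finset.Icc 1 q,
      |p i * (∫ s in Set.Ioc 0 (min u (ts i)),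
          lam i s * Real.exp (-(Lam lam i s)) * Wf q d ts lam Q fW phi v p i s)
        - p i * ∫ s in Set.Ioc 0 (min u' (ts i)),
          lam i s * Real.exp (-(Lam lam i s)) * Wf q d ts lam Q fW phi v p i s|
        ≤ p i * (Cv * Clam * |u - u'|) := by
    intro i hi
    rw [Finset.mem_Icc] at hi
    have hpi : 0 ≤ p i := mem1_coord hp hi.1 hi.2
    have htsi : ts i ≤ ts q := ts_mono' htsmono hi.2 le_rfl
    rw [← mul_sub, abs_mul, abs_of_nonneg hpi]
    apply mul_le_mul_of_nonneg_left ?_ hpi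
    -- core bound
    have core : ∀ x y : ℝ, 0 ≤ x → x ≤ y → y ≤ ts q →
        |(∫ s in Set.Ioc 0 y,
            lam i s * Real.exp (-(Lam lam i s)) * Wf q d ts lam Q fW phi v p i s)
          - ∫ s in Set.Ioc 0 x,
            lam i s * Real.exp (-(Lam lam i s)) * Wf q d ts lam Q fW phi v p i s|
          ≤ Cv * Clam * (y - x) := by
      intro x y hx hxy hyq
      have hi1 : IntegrableOn
          (fun s => lam i s * Real.exp (-(Lam lam i s)) * Wf q d ts lam Q fW phi v p i s)
          (Set.Ioc 0 x) volume :=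
        integrableOn_clWf hts0 htsmono hClam hlam_meas hlam_bd hQ_meas hQ_bd hQ_sum
          hfW_meas hfW_nonneg hfW_int hv_meas hCv hv_bd hp i le_rfl (le_trans hxy hyq)
      have hi2 : IntegrableOn
          (fun s => lam i s * Real.exp (-(Lam lam i s)) * Wf q d ts lam Q fW phi v p i s)
          (Set.Ioc x y) volume :=
        integrableOn_clWf hts0 htsmono hClam hlam_meas hlam_bd hQ_meas hQ_bd hQ_sum
          hfW_meas hfW_nonneg hfW_int hv_meas hCv hv_bd hp i hx hyq
      have hsplit : (∫ s in Set.Ioc 0 y,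
            lam i s * Real.exp (-(Lam lam i s)) * Wf q d ts lam Q fW phi v p i s)
          = (∫ s in Set.Ioc 0 x,
              lam i s * Real.exp (-(Lam lam i s)) * Wf q d ts lam Q fW phi v p i s)
            + ∫ s in Set.Ioc x y,
              lam i s * Real.exp (-(Lam lam i s)) * Wf q d ts lam Q fW phi v p i s := by
        rw [← setIntegral_union (Set.Ioc_disjoint_Ioc_of_le le_rfl) measurableSet_Ioc hi1 hi2,
          Set.Ioc_union_Ioc_eq_Ioc hx hxy]
      rw [hsplit, add_sub_cancel_left]
      calc |∫ s in Set.Ioc x y,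
            lam i s * Real.exp (-(Lam lam i s)) * Wf q d ts lam Q fW phi v p i s|
          ≤ (Cv * Clam) * (volume (Set.Ioc x y)).toReal := by
            rw [← Real.norm_eq_abs]
            apply norm_setIntegral_le_of_norm_le_const measure_Ioc_lt_top
              (fun s hs => ?_)
            have hs0 : 0 ≤ s := le_trans hx hs.1.le
            rw [Real.norm_eq_abs, abs_mul]
            rw [show Cv * Clam = Clam * Cv by ring]
            apply mul_le_mul
            · rw [abs_of_nonneg (cl_nonneg hClam hlam_meas hlam_bd i hs0)]
              exact cl_le hClam hlam_meas hlam_bd i hs0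
            · exact Wf_bound hts0 htsmono hClam hlam_bd hQ_bd hfW_meas hfW_nonneg hfW_int
                hCv hv_bd hp i hs0 hQ_sum
            · exact abs_nonneg _
            · exact hClam
        _ = Cv * Clam * (y - x) := by
            rw [Real.volume_Ioc, ENNReal.toReal_ofReal (by linarith)]
    have hmin := min_lip u u' (ts i)
    rcases le_total (min u (ts i)) (min u' (ts i)) with h | h
    · rw [abs_sub_comm]
      refine le_trans (core _ _ (le_min hu (ts_nonneg hts0 htsmono hi.2)) h
        (le_trans (min_le_right _ _) htsi)) ?_
      apply mul_le_mul_of_nonneg_left ?_ (by positivity)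
      rw [abs_sub_comm] at hmin
      rw [abs_of_nonneg (by linarith)] at hmin
      exact hmin
    · refine le_trans (core _ _ (le_min hu' (ts_nonneg hts0 htsmono hi.2)) h
        (le_trans (min_le_right _ _) htsi)) ?_
      apply mul_le_mul_of_nonneg_left ?_ (by positivity)
      rw [abs_of_nonneg (by linarith)] at hmin
      exact hmin
  refine le_trans (Finset.sum_le_sum hbd) ?_
  rw [← Finset.sum_mul, hp.2, one_mul]

end Assemble

section Assemble2

variable (hts0 : ts 0 = 0) (htsmono : ∀ i, i < q → ts i ≤ ts (i + 1))
  (hClam : 0 ≤ Clam) (hlam_meas : ∀ i, Measurable (lam i))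
  (hlam_bd : ∀ i s, 0 ≤ s → lam i s ∈ Set.Icc 0 Clam)
  (hQ_meas : ∀ i j, Measurable (Q i j))
  (hQ_bd : ∀ i j s, 0 ≤ s → Q i j s ∈ Set.Icc (0:ℝ) 1)
  (hQ_sum : ∀ i s, 0 ≤ s → ∑ j ∈ Finset.Icc 1 q, Q i j s = 1)
  (hfW_meas : Measurable fW) (hfW_nonneg : ∀ y, 0 ≤ fW y)
  (hfW_int : ∫ y : Fin d → ℝ, fW y = 1)
  (hv_meas : Measurable v) (hCv : 0 ≤ Cv) (hlv : 0 ≤ lv)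
  (hv_bd : ∀ r, mem1 q r → |v r| ≤ Cv)
  (hv_lip : ∀ r r', mem1 q r → mem1 q r' → |v r - v r'| ≤ lv * l1 q r r')

include hts0 htsmono hClam hlam_meas hlam_bd hQ_meas hQ_bd hQ_sum hfW_meas hfW_nonneg
  hfW_int hv_meas hCv hlv hv_bd hv_lip in
lemma stepB {p p' : ℕ → ℝ} (hp : mem1 q p) (hp' : mem1 q p') {u' : ℝ} (hu' : 0 ≤ u') :
    |Iop q d ts lam Q fW phi v p u' - Iop q d ts lam Q fW phi v p' u'|
      ≤ (Cv + 2 * lv) * l1 q p p' := by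
  classical
  set F : (ℕ → ℝ) → ℕ → ℝ → ℝ := fun r i s =>
    r i * (lam i s * Real.exp (-(Lam lam i s)) * Wf q d ts lam Q fW phi v r i s) with hF
  have hind : ∀ (r : ℕ → ℝ), mem1 q r → ∀ i ∈ Finset.Icc 1 q,
      Integrable ((Set.Ioc 0 (ts i)).indicator (F r i)) (volume.restrict (Set.Ioc 0 u')) := by
    intro r hr i hi
    rw [Finset.mem_Icc] at hi
    rw [integrable_indicator_iff measurableSet_Ioc, IntegrableOn,
      Measure.restrict_restrict measurableSet_Ioc, Set.Ioc_inter_Ioc, sup_idem]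
    have hbase : IntegrableOn
        (fun s => lam i s * Real.exp (-(Lam lam i s)) * Wf q d ts lam Q fW phi v r i s)
        (Set.Ioc 0 (min (ts i) u')) volume :=
      integrableOn_clWf hts0 htsmono hClam hlam_meas hlam_bd hQ_meas hQ_bd hQ_sum
        hfW_meas hfW_nonneg hfW_int hv_meas hCv hv_bd hr i le_rfl
        (le_trans (min_le_left _ _) (ts_mono' htsmono hi.2 le_rfl))
    exact hbase.const_mul (r i)
  have hconv : ∀ (r : ℕ → ℝ), mem1 q r → ∀ i ∈ Finset.Icc 1 q,
      r i * (∫ s in Set.Ioc 0 (min u' (ts i)),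
          lam i s * Real.exp (-(Lam lam i s)) * Wf q d ts lam Q fW phi v r i s)
        = ∫ s in Set.Ioc 0 u', (Set.Ioc 0 (ts i)).indicator (F r i) s := by
    intro r hr i hi
    rw [setIntegral_indicator measurableSet_Ioc, Set.Ioc_inter_Ioc, sup_idem, hF,
      ← integral_const_mul]
  rw [Iop_as_setIntegral hts0 htsmono p hu', Iop_as_setIntegral hts0 htsmono p' hu',
    ← Finset.sum_sub_distrib]
  have hmain : ∑ i ∈ Finset.Icc 1 q,
        (p i * (∫ s in Set.Ioc 0 (min u' (ts i)),
            lam i s * Real.exp (-(Lam lam i s)) * Wf q d ts lam Q fW phi v p i s)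
          - p' i * ∫ s in Set.Ioc 0 (min u' (ts i)),
            lam i s * Real.exp (-(Lam lam i s)) * Wf q d ts lam Q fW phi v p' i s)
      = ∫ s in Set.Ioc 0 u', ∑ i ∈ Finset.Icc 1 q,
          ((Set.Ioc 0 (ts i)).indicator (F p i) s
            - (Set.Ioc 0 (ts i)).indicator (F p' i) s) := by
    rw [integral_finset_sum (Finset.Icc 1 q)
      (f := fun i s => (Set.Ioc 0 (ts i)).indicator (F p i) s
        - (Set.Ioc 0 (ts i)).indicator (F p' i) s)
      (fun i hi => ((hind p hp i hi).sub (hind p' hp' i hi)))]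
    refine Finset.sum_congr rfl fun i hi => ?_
    rw [integral_sub (hind p hp i hi) (hind p' hp' i hi), hconv p hp i hi,
      hconv p' hp' i hi]
  rw [hmain]
  set h : ℝ → ℝ := fun s => (Cv + 2*lv) * ∑ l ∈ Finset.Icc 1 q, |p l - p' l| *
    (Set.Ioc 0 (ts l)).indicator (fun u => lam l u * Real.exp (-(Lam lam l u))) s with hh
  have hindcl : ∀ l ∈ Finset.Icc 1 q, Integrable
      ((Set.Ioc 0 (ts l)).indicator (fun u => lam l u * Real.exp (-(Lam lam l u))))
      (volume.restrict (Set.Ioc 0 u')) := by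
    intro l hl
    rw [integrable_indicator_iff measurableSet_Ioc, IntegrableOn,
      Measure.restrict_restrict measurableSet_Ioc, Set.Ioc_inter_Ioc, sup_idem]
    exact integrableOn_cl hClam hlam_meas hlam_bd l le_rfl
  have hhint : Integrable h (volume.restrict (Set.Ioc 0 u')) := by
    simp only [hh]
    apply Integrable.const_mul
    apply integrable_finset_sum
    intro l hl
    exact (hindcl l hl).const_mul _
  have hbadnull : volume (ts '' (Set.Iic q)) = 0 :=
    Set.Countable.measure_zero ((Set.finite_Iic q).image ts).countable _
  have h0 : ∀ᵐ s ∂(volume : Measure ℝ), s ∉ ts '' (Set.Iic q) := by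
    rw [ae_iff]
    simpa only [not_not, Set.setOf_mem_eq] using hbadnull
  have hae : ∀ᵐ s ∂(volume.restrict (Set.Ioc 0 u')),
      ‖∑ i ∈ Finset.Icc 1 q, ((Set.Ioc 0 (ts i)).indicator (F p i) s
          - (Set.Ioc 0 (ts i)).indicator (F p' i) s)‖ ≤ h s := by
    filter_upwards [ae_restrict_of_ae h0, ae_restrict_mem measurableSet_Ioc] with s hs1 hs2
    rcases le_or_gt s (ts q) with hsq | hsq
    · obtain ⟨m, hmq, hm1, hm2⟩ := exists_Ioo hts0 htsmono hs2.1 hsq hs1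
      have hmem : ∀ i, m+1 ≤ i → i ≤ q → s ∈ Set.Ioc 0 (ts i) :=
        fun i hi1 hi2 => ⟨hs2.1, le_trans hm2.le (ts_mono' htsmono hi1 hi2)⟩
      have hnot : ∀ i, i ≤ m → s ∉ Set.Ioc 0 (ts i) := by
        intro i hi2 hcon
        have : ts i ≤ ts m := ts_mono' htsmono hi2 hmq.le
        have := hcon.2
        linarith
      have hsub : Finset.Icc (m+1) q ⊆ Finset.Icc 1 q := by
        intro x hx
        rw [Finset.mem_Icc] at *
        omega
      have hsum1 : ∑ i ∈ Finset.Icc 1 q, ((Set.Ioc 0 (ts i)).indicator (F p i) s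
            - (Set.Ioc 0 (ts i)).indicator (F p' i) s)
          = ∑ i ∈ Finset.Icc (m+1) q, (F p i s - F p' i s) := by
        rw [← Finset.sum_subset hsub (fun i hi hni => ?_)]
        · refine Finset.sum_congr rfl fun i hi => ?_
          rw [Finset.mem_Icc] at hi
          rw [Set.indicator_of_mem (hmem i hi.1 hi.2) (F p i),
            Set.indicator_of_mem (hmem i hi.1 hi.2) (F p' i)]
        · rw [Finset.mem_Icc] at hi hni
          have him : i ≤ m := by omega
          rw [Set.indicator_of_notMem (hnot i him) (F p i),
            Set.indicator_of_notMem (hnot i him) (F p' i), sub_zero]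
      have hsum2 : h s = (Cv + 2*lv) * ∑ l ∈ Finset.Icc (m+1) q,
          |p l - p' l| * (lam l s * Real.exp (-(Lam lam l s))) := by
        simp only [hh]
        congr 1
        rw [← Finset.sum_subset hsub (fun l hl hnl => ?_)]
        · refine Finset.sum_congr rfl fun l hl => ?_
          rw [Finset.mem_Icc] at hl
          rw [Set.indicator_of_mem (hmem l hl.1 hl.2)]
        · rw [Finset.mem_Icc] at hl hnl
          have hlm : l ≤ m := by omega
          rw [Set.indicator_of_notMem (hnot l hlm), mul_zero]
      rw [Real.norm_eq_abs, hsum1, hsum2]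
      simp only [hF]
      exact pointwise_s_bound hts0 htsmono hClam hlam_meas hlam_bd hQ_meas hQ_bd hQ_sum
        hfW_meas hfW_nonneg hfW_int hv_meas hCv hlv hv_bd hv_lip hp hp' hmq hm1 hm2
    · have hz : ∀ i ∈ Finset.Icc 1 q, ((Set.Ioc 0 (ts i)).indicator (F p i) s
            - (Set.Ioc 0 (ts i)).indicator (F p' i) s) = 0 := by
        intro i hi
        rw [Finset.mem_Icc] at hi
        have hnot : s ∉ Set.Ioc 0 (ts i) := by
          intro hcon
          have : ts i ≤ ts q := ts_mono' htsmono hi.2 le_rfl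
          have := hcon.2
          linarith
        rw [Set.indicator_of_notMem hnot (F p i),
          Set.indicator_of_notMem hnot (F p' i), sub_zero]
      rw [Finset.sum_eq_zero hz, norm_zero]
      simp only [hh]
      apply mul_nonneg (by positivity)
      apply Finset.sum_nonneg
      intro l hl
      apply mul_nonneg (abs_nonneg _)
      apply Set.indicator_nonneg
      intro a ha
      exact cl_nonneg hClam hlam_meas hlam_bd l ha.1.le
  calc |∫ s in Set.Ioc 0 u', ∑ i ∈ Finset.Icc 1 q,
        ((Set.Ioc 0 (ts i)).indicator (F p i) s - (Set.Ioc 0 (ts i)).indicator (F p' i) s)|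
      = ‖∫ s in Set.Ioc 0 u', ∑ i ∈ Finset.Icc 1 q,
        ((Set.Ioc 0 (ts i)).indicator (F p i) s - (Set.Ioc 0 (ts i)).indicator (F p' i) s)‖ :=
        (Real.norm_eq_abs _).symm
    _ ≤ ∫ s in Set.Ioc 0 u', ‖∑ i ∈ Finset.Icc 1 q,
        ((Set.Ioc 0 (ts i)).indicator (F p i) s - (Set.Ioc 0 (ts i)).indicator (F p' i) s)‖ :=
        norm_integral_le_integral_norm _
    _ ≤ ∫ s in Set.Ioc 0 u', h s :=
        integral_mono_of_nonneg (ae_of_all _ fun s => norm_nonneg _) hhint hae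
    _ ≤ (Cv + 2*lv) * l1 q p p' := by
        simp only [hh]
        rw [integral_const_mul]
        apply mul_le_mul_of_nonneg_left ?_ (by positivity)
        rw [integral_finset_sum _ (fun l hl => (hindcl l hl).const_mul _)]
        unfold l1
        apply Finset.sum_le_sum
        intro l hl
        rw [Finset.mem_Icc] at hl
        rw [integral_const_mul]
        have hIle : (∫ s in Set.Ioc 0 u',
            (Set.Ioc 0 (ts l)).indicator (fun u => lam l u * Real.exp (-(Lam lam l u))) s) ≤ 1 := by
          rw [setIntegral_indicator measurableSet_Ioc, Set.Ioc_inter_Ioc, sup_idem]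
          exact int_cl_le_one hClam hlam_meas hlam_bd l (le_min hu'
            (ts_nonneg hts0 htsmono hl.2))
        calc |p l - p' l| * ∫ s in Set.Ioc 0 u',
              (Set.Ioc 0 (ts l)).indicator (fun u => lam l u * Real.exp (-(Lam lam l u))) s
            ≤ |p l - p' l| * 1 := mul_le_mul_of_nonneg_left hIle (abs_nonneg _)
          _ = |p l - p' l| := mul_one _

end Assemble2
end Main

/-- **Proposition C.5 (Lipschitz continuity of `I`).** -/
theorem Iop_lipschitz
    (q d : ℕ) (hq : 1 ≤ q) (hd : 1 ≤ d)
    (ts : ℕ → ℝ) (hts0 : ts 0 = 0) (hts1 : 0 < ts 1)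
    (htsmono : ∀ i, i < q → ts i ≤ ts (i + 1))
    (Clam : ℝ) (hClam : 0 ≤ Clam)
    (lam : ℕ → ℝ → ℝ) (hlam_meas : ∀ i, Measurable (lam i))
    (hlam_bd : ∀ i s, 0 ≤ s → lam i s ∈ Set.Icc 0 Clam)
    (Q : ℕ → ℕ → ℝ → ℝ) (hQ_meas : ∀ i j, Measurable (Q i j))
    (hQ_bd : ∀ i j s, 0 ≤ s → Q i j s ∈ Set.Icc (0:ℝ) 1)
    (hQ_sum : ∀ i s, 0 ≤ s → ∑ j ∈ Finset.Icc 1 q, Q i j s = 1)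
    (fW : (Fin d → ℝ) → ℝ) (hfW_meas : Measurable fW)
    (hfW_nonneg : ∀ y, 0 ≤ fW y) (hfW_int : ∫ y : Fin d → ℝ, fW y = 1)
    (phi : ℕ → Fin d → ℝ)
    (v : (ℕ → ℝ) → ℝ) (hv_meas : Measurable v)
    (Cv lv : ℝ) (hCv : 0 ≤ Cv) (hlv : 0 ≤ lv)
    (hv_bd : ∀ p, mem1 q p → |v p| ≤ Cv)
    (hv_lip : ∀ p p', mem1 q p → mem1 q p' → |v p - v p'| ≤ lv * l1 q p p')
    (p p' : ℕ → ℝ) (hp : mem1 q p) (hp' : mem1 q p')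
    (u u' : ℝ) (hu : 0 ≤ u) (hu' : 0 ≤ u') :
    |Iop q d ts lam Q fW phi v p u - Iop q d ts lam Q fW phi v p' u'| ≤
      (Cv + 2 * lv) * l1 q p p' + Cv * Clam * |u - u'| := by
  have h1 : |Iop q d ts lam Q fW phi v p u - Iop q d ts lam Q fW phi v p u'|
      ≤ Cv * Clam * |u - u'| :=
    stepA (phi := phi) hts0 htsmono hClam hlam_meas hlam_bd hQ_meas hQ_bd hQ_sum
      hfW_meas hfW_nonneg hfW_int hv_meas hCv hv_bd hp hu hu'
  have h2 : |Iop q d ts lam Q fW phi v p u' - Iop q d ts lam Q fW phi v p' u'|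
      ≤ (Cv + 2 * lv) * l1 q p p' :=
    stepB (phi := phi) hts0 htsmono hClam hlam_meas hlam_bd hQ_meas hQ_bd hQ_sum
      hfW_meas hfW_nonneg hfW_int hv_meas hCv hlv hv_bd hv_lip hp hp' hu'
  calc |Iop q d ts lam Q fW phi v p u - Iop q d ts lam Q fW phi v p' u'|
      ≤ |Iop q d ts lam Q fW phi v p u - Iop q d ts lam Q fW phi v p u'|
        + |Iop q d ts lam Q fW phi v p u' - Iop q d ts lam Q fW phi v p' u'| :=
        abs_sub_le _ _ _
    _ ≤ Cv * Clam * |u - u'| + (Cv + 2 * lv) * l1 q p p' := add_le_add h1 h2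
    _ = (Cv + 2 * lv) * l1 q p p' + Cv * Clam * |u - u'| := by ring

end PDMP
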